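/- arXiv:2506.12872 — 5 statements merged into one kernel-verified Lean document; each statement's English description precedes it below -/
import Mathlib

section
/- Fix a finite state space S, rates q, constants C₀ > 0 and a time horizon t > 0. There exists a constant C (depending only on S, the rates, C₀ and t) such that the following holds for every N: let B and B̂ be N×N matrices with nonnegative entries such that every row sum of B is at most C₀ and ‖B̂‖₂ ≤ C₀; let z, ẑ : [0,t] → ([0,1]^S)^N be solutions of the NIMFA system with matrices B and B̂ respectively, with identical initial conditions z_{i,s}(0) = ẑ_{i,s}(0). Then, setting Δ̃_i(t) = sup_{0 ≤ τ ≤ t} max_{s ∈ S} |z_{i,s}(τ) − ẑ_{i,s}(τ)|, one has (1/N)·Σ_{i=1}^{N} Δ̃_i(t)² ≤ C·‖B − B̂‖₂². -/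
open Finset

/-- The ℓ²→ℓ² operator (spectral) norm of a real square matrix. -/
noncomputable def opNorm2 {N : ℕ} (M : Matrix (Fin N) (Fin N) ℝ) : ℝ :=
  ‖LinearMap.toContinuousLinearMap (Matrix.toEuclideanLin M)‖

/-- Right-hand side of the NIMFA ODE system for the state `z : Fin N → S → ℝ`:
`(d/dt) z_{i,s} = Σ_{s'} q_{s'→s} z_{i,s'} + Σ_{s',s̃} q_{s̃;s'→s} z_{i,s'}·(B z_{·,s̃})_i`,
where `qs s' s = q_{s'→s}` and `qi s̃ s' s = q_{s̃;s'→s}`. -/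
def nimfaRHS {S : Type*} [Fintype S] {N : ℕ} (qs : S → S → ℝ) (qi : S → S → S → ℝ)
    (B : Matrix (Fin N) (Fin N) ℝ) (z : Fin N → S → ℝ) (i : Fin N) (s : S) : ℝ :=
  (∑ s', qs s' s * z i s') +
    ∑ s', ∑ st, qi st s' s * z i s' * (∑ j, B i j * z j st)

lemma euclid_norm_le {ι : Type*} [Fintype ι] (x : EuclideanSpace ℝ ι) {c : ℝ}
    (hc : 0 ≤ c) (h : ∑ i, (x i) ^ 2 ≤ c ^ 2) : ‖x‖ ≤ c := by
  rw [EuclideanSpace.norm_eq]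
  simp only [Real.norm_eq_abs, sq_abs]
  calc Real.sqrt (∑ i, x i ^ 2) ≤ Real.sqrt (c ^ 2) := Real.sqrt_le_sqrt h
  _ = c := Real.sqrt_sq hc

lemma euclid_sq_sum {ι : Type*} [Fintype ι] (x : EuclideanSpace ℝ ι) :
    ∑ i, (x i) ^ 2 = ‖x‖ ^ 2 := by
  rw [EuclideanSpace.norm_eq]
  simp only [Real.norm_eq_abs, sq_abs]
  rw [Real.sq_sqrt (Finset.sum_nonneg fun i _ => sq_nonneg _)]

lemma opNorm2_nonneg {N : ℕ} (M : Matrix (Fin N) (Fin N) ℝ) : 0 ≤ opNorm2 M := norm_nonneg _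

lemma opNorm2_add_le {N : ℕ} (M M' : Matrix (Fin N) (Fin N) ℝ) :
    opNorm2 (M + M') ≤ opNorm2 M + opNorm2 M' := by
  unfold opNorm2
  rw [map_add, map_add]
  exact norm_add_le _ _

lemma mulVec_sq_sum_le {N : ℕ} (M : Matrix (Fin N) (Fin N) ℝ) (y : Fin N → ℝ) :
    ∑ i, (∑ j, M i j * y j) ^ 2 ≤ opNorm2 M ^ 2 * ∑ j, (y j) ^ 2 := by
  have h := (LinearMap.toContinuousLinearMap (Matrix.toEuclideanLin M)).le_opNorm
      ((WithLp.equiv 2 (Fin N → ℝ)).symm y)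
  rw [LinearMap.coe_toContinuousLinearMap'] at h
  change ‖(WithLp.equiv 2 (Fin N → ℝ)).symm (M.mulVec y)‖ ≤ _ at h
  have hnorm1 : ‖((WithLp.equiv 2 (Fin N → ℝ)).symm (M.mulVec y))‖
      = Real.sqrt (∑ i, (∑ j, M i j * y j) ^ 2) := by
    rw [EuclideanSpace.norm_eq]
    congr 1
    refine Finset.sum_congr rfl fun i _ => ?_
    simp [Matrix.mulVec, dotProduct, Real.norm_eq_abs, sq_abs]
  have hnorm2 : ‖((WithLp.equiv 2 (Fin N → ℝ)).symm y)‖ = Real.sqrt (∑ j, (y j) ^ 2) := by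
    rw [EuclideanSpace.norm_eq]
    simp [Real.norm_eq_abs, sq_abs]
  rw [hnorm1, hnorm2] at h
  have h2 : Real.sqrt (∑ i, (∑ j, M i j * y j) ^ 2) ^ 2
      ≤ (opNorm2 M * Real.sqrt (∑ j, (y j) ^ 2)) ^ 2 :=
    pow_le_pow_left₀ (Real.sqrt_nonneg _) h 2
  rw [Real.sq_sqrt (Finset.sum_nonneg fun i _ => sq_nonneg _)] at h2
  calc ∑ i, (∑ j, M i j * y j) ^ 2 ≤ (opNorm2 M * Real.sqrt (∑ j, (y j) ^ 2)) ^ 2 := h2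
  _ = opNorm2 M ^ 2 * ∑ j, (y j) ^ 2 := by
      rw [mul_pow, Real.sq_sqrt (Finset.sum_nonneg fun j _ => sq_nonneg _)]

lemma iSup_sq_le {S : Type} [Fintype S] [Nonempty S] {t : ℝ} (ht : 0 < t)
    (F : ℝ → S → ℝ) {c : ℝ}
    (h : ∀ τ ∈ Set.Icc (0:ℝ) t, ∀ s, |F τ s| ≤ c) :
    (⨆ τ : Set.Icc (0:ℝ) t, ⨆ s : S, |F τ s|) ^ 2 ≤ c ^ 2 := by
  have hne : Nonempty (Set.Icc (0:ℝ) t) := ⟨⟨0, le_refl 0, ht.le⟩⟩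
  have hub : (⨆ τ : Set.Icc (0:ℝ) t, ⨆ s : S, |F τ s|) ≤ c :=
    ciSup_le fun τ => ciSup_le fun s => h τ τ.2 s
  have hnn : 0 ≤ (⨆ τ : Set.Icc (0:ℝ) t, ⨆ s : S, |F τ s|) :=
    Real.iSup_nonneg fun τ => Real.iSup_nonneg fun s => abs_nonneg _
  exact pow_le_pow_left₀ hnn hub 2


set_option maxHeartbeats 1000000 in
/-- Fix a finite state space `S`, rates `q`, a constant `C₀ > 0` and a time
horizon `t > 0`.  There is a constant `C` (depending only on `S`, the rates, `C₀` and `t`) such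
that for all `N`, all nonnegative `N×N` matrices `B, B̂` with row sums of `B` at most `C₀` and
`‖B̂‖₂ ≤ C₀`, and all `[0,1]`-valued solutions `z, ẑ` of the NIMFA systems for `B` resp. `B̂`
with identical initial conditions, one has
`(1/N)·Σ_i (sup_{0≤τ≤t} max_s |z_{i,s}(τ) − ẑ_{i,s}(τ)|)² ≤ C·‖B − B̂‖₂²`. -/
theorem stmt_2 (S : Type) [Fintype S] [DecidableEq S] [Nonempty S]
    (qs : S → S → ℝ) (qi : S → S → S → ℝ)
    (hqs : ∀ s' s, s' ≠ s → 0 ≤ qs s' s)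
    (hqsd : ∀ s, qs s s = -∑ s' ∈ Finset.univ \ {s}, qs s s')
    (hqi : ∀ st s' s, s' ≠ s → 0 ≤ qi st s' s)
    (hqid : ∀ st s, qi st s s = -∑ s' ∈ Finset.univ \ {s}, qi st s s')
    (C₀ t : ℝ) (hC₀ : 0 < C₀) (ht : 0 < t) :
    ∃ C : ℝ, 0 < C ∧
      ∀ (N : ℕ) (B Bhat : Matrix (Fin N) (Fin N) ℝ),
        (∀ i j, 0 ≤ B i j) → (∀ i j, 0 ≤ Bhat i j) →
        (∀ i, ∑ j, B i j ≤ C₀) → opNorm2 Bhat ≤ C₀ →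
        ∀ (z zhat : ℝ → Fin N → S → ℝ),
        -- the trajectories take values in [0,1]
        (∀ τ ∈ Set.Icc (0:ℝ) t, ∀ i s, z τ i s ∈ Set.Icc (0:ℝ) 1) →
        (∀ τ ∈ Set.Icc (0:ℝ) t, ∀ i s, zhat τ i s ∈ Set.Icc (0:ℝ) 1) →
        -- `z` solves NIMFA with matrix `B`, `zhat` solves NIMFA with matrix `Bhat`
        (∀ τ ∈ Set.Icc (0:ℝ) t, ∀ i s,
          HasDerivAt (fun u => z u i s) (nimfaRHS qs qi B (z τ) i s) τ) →
        (∀ τ ∈ Set.Icc (0:ℝ) t, ∀ i s,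
          HasDerivAt (fun u => zhat u i s) (nimfaRHS qs qi Bhat (zhat τ) i s) τ) →
        -- identical initial conditions
        (∀ i s, z 0 i s = zhat 0 i s) →
        (1 / N) * ∑ i,
            (⨆ τ : Set.Icc (0:ℝ) t, ⨆ s : S, |z τ i s - zhat τ i s|) ^ 2 ≤
          C * opNorm2 (B - Bhat) ^ 2 := by
  classical
  set cS : ℝ := (Fintype.card S : ℝ) with hcSdef
  have hcS1 : (1:ℝ) ≤ cS := by
    have := Fintype.card_pos (α := S)
    rw [hcSdef]; exact_mod_cast this
  have hcS0 : (0:ℝ) ≤ cS := by linarith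
  set Mq : ℝ := ∑ s' : S, ∑ s : S, |qs s' s| with hMqdef
  set Mi : ℝ := ∑ st : S, ∑ s' : S, ∑ s : S, |qi st s' s| with hMidef
  have hMq0 : 0 ≤ Mq := Finset.sum_nonneg fun _ _ => Finset.sum_nonneg fun _ _ => abs_nonneg _
  have hMi0 : 0 ≤ Mi := Finset.sum_nonneg fun _ _ => Finset.sum_nonneg fun _ _ =>
    Finset.sum_nonneg fun _ _ => abs_nonneg _
  have hMqb : ∀ a b, |qs a b| ≤ Mq := by
    intro a b
    calc |qs a b| ≤ ∑ s : S, |qs a s| :=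
          Finset.single_le_sum (f := fun s => |qs a s|) (fun s _ => abs_nonneg _)
            (Finset.mem_univ b)
    _ ≤ Mq := Finset.single_le_sum (f := fun s' => ∑ s : S, |qs s' s|)
          (fun s' _ => Finset.sum_nonneg fun s _ => abs_nonneg _) (Finset.mem_univ a)
  have hMib : ∀ a b c, |qi a b c| ≤ Mi := by
    intro a b c
    calc |qi a b c| ≤ ∑ s : S, |qi a b s| :=
          Finset.single_le_sum (f := fun s => |qi a b s|) (fun s _ => abs_nonneg _)
            (Finset.mem_univ c)
    _ ≤ ∑ s' : S, ∑ s : S, |qi a s' s| :=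
          Finset.single_le_sum (f := fun s' => ∑ s : S, |qi a s' s|)
            (fun s' _ => Finset.sum_nonneg fun s _ => abs_nonneg _) (Finset.mem_univ b)
    _ ≤ Mi := Finset.single_le_sum (f := fun st => ∑ s' : S, ∑ s : S, |qi st s' s|)
          (fun st _ => Finset.sum_nonneg fun _ _ => Finset.sum_nonneg fun _ _ => abs_nonneg _)
          (Finset.mem_univ a)
  set A : ℝ := Mq + cS * Mi * C₀ with hAdef
  have hA0 : 0 ≤ A := by
    have : 0 ≤ cS * Mi * C₀ := by positivity
    linarith
  set K : ℝ := cS * A + Mi * cS ^ 2 * (C₀ + 1) + 1 with hKdef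
  have hK1 : 1 ≤ K := by
    have h1 : 0 ≤ cS * A := mul_nonneg hcS0 hA0
    have h2 : 0 ≤ Mi * cS ^ 2 * (C₀ + 1) :=
      mul_nonneg (mul_nonneg hMi0 (sq_nonneg cS)) (by linarith)
    linarith
  have hK0 : 0 ≤ K := by linarith
  set R : ℝ := K * Real.exp (K * t) + 1 with hRdef
  have hR0 : 0 ≤ R := by
    have := (Real.exp_pos (K * t)).le
    have := mul_nonneg hK0 this
    linarith
  have hcoeff0 : 0 ≤ t ^ 2 * R ^ 2 * Mi ^ 2 * cS ^ 5 :=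
    mul_nonneg (mul_nonneg (mul_nonneg (sq_nonneg t) (sq_nonneg R)) (sq_nonneg Mi))
      (pow_nonneg hcS0 5)
  refine ⟨t ^ 2 * R ^ 2 * Mi ^ 2 * cS ^ 5 + 1, by linarith, ?_⟩
  intro N B Bhat hB0 hBhat0 hBrow hBhatnorm z zhat hz01 hzhat01 hz hzhat hinit
  set d : ℝ := opNorm2 (B - Bhat) with hddef
  have hd0 : 0 ≤ d := opNorm2_nonneg _
  -- trivial bound on the suprema
  have hsup1 : ∀ i : Fin N,
      (⨆ τ : Set.Icc (0:ℝ) t, ⨆ s : S, |z τ i s - zhat τ i s|) ^ 2 ≤ 1 := by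
    intro i
    have := iSup_sq_le (S := S) ht (fun τ s => z τ i s - zhat τ i s) (c := 1) ?_
    · simpa using this
    · intro τ hτ s
      have h1 := hz01 τ hτ i s
      have h2 := hzhat01 τ hτ i s
      rw [Set.mem_Icc] at h1 h2
      show |z τ i s - zhat τ i s| ≤ 1
      rw [abs_le]
      constructor <;> linarith [h1.1, h1.2, h2.1, h2.2]
  by_cases hd1 : 1 ≤ d
  · -- trivial case: ‖B - Bhat‖ ≥ 1
    have hsum : ∑ i : Fin N,
        (⨆ τ : Set.Icc (0:ℝ) t, ⨆ s : S, |z τ i s - zhat τ i s|) ^ 2 ≤ (N : ℝ) := by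
      calc ∑ i : Fin N, (⨆ τ : Set.Icc (0:ℝ) t, ⨆ s : S, |z τ i s - zhat τ i s|) ^ 2
          ≤ ∑ _i : Fin N, (1:ℝ) := Finset.sum_le_sum fun i _ => hsup1 i
      _ = (N : ℝ) := by simp
    have hLHS : (1 / (N:ℝ)) * ∑ i : Fin N,
        (⨆ τ : Set.Icc (0:ℝ) t, ⨆ s : S, |z τ i s - zhat τ i s|) ^ 2 ≤ 1 := by
      rcases Nat.eq_zero_or_pos N with rfl | hN
      · simp
      · have hNne : (N:ℝ) ≠ 0 := Nat.cast_ne_zero.2 hN.ne'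
        have h0 : 0 ≤ (1 / (N:ℝ)) := by positivity
        calc (1 / (N:ℝ)) * ∑ i : Fin N, _ ≤ (1 / (N:ℝ)) * (N:ℝ) :=
              mul_le_mul_of_nonneg_left hsum h0
        _ = 1 := by field_simp
    have hRHS : (1:ℝ) ≤ (t ^ 2 * R ^ 2 * Mi ^ 2 * cS ^ 5 + 1) * d ^ 2 := by
      nlinarith [hcoeff0, hd1, hd0]
    exact le_trans hLHS hRHS
  · push_neg at hd1
    rcases Nat.eq_zero_or_pos N with rfl | hN
    · simp only [Nat.cast_zero, div_zero, Finset.univ_eq_empty, Finset.sum_empty, mul_zero,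
        zero_mul]
      exact mul_nonneg (by linarith) (sq_nonneg _)
    have hNne : (N:ℝ) ≠ 0 := Nat.cast_ne_zero.2 hN.ne'
    have hBop : opNorm2 B ≤ C₀ + 1 := by
      have h1 : B = (B - Bhat) + Bhat := (sub_add_cancel B Bhat).symm
      calc opNorm2 B = opNorm2 ((B - Bhat) + Bhat) := by rw [← h1]
      _ ≤ opNorm2 (B - Bhat) + opNorm2 Bhat := opNorm2_add_le _ _
      _ ≤ C₀ + 1 := by rw [← hddef]; linarith
    -- the trajectory difference and its derivative, as Euclidean-space valued maps
    set L := (PiLp.continuousLinearEquiv 2 ℝ (fun _ : Fin N × S => ℝ)).symm with hLdef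
    set f₀ : ℝ → (Fin N × S) → ℝ := fun u p => z u p.1 p.2 - zhat u p.1 p.2 with hf₀def
    set g₀ : ℝ → (Fin N × S) → ℝ := fun u p =>
      nimfaRHS qs qi B (z u) p.1 p.2 - nimfaRHS qs qi Bhat (zhat u) p.1 p.2 with hg₀def
    set fE : ℝ → EuclideanSpace ℝ (Fin N × S) := fun u => L (f₀ u) with hfEdef
    set gE : ℝ → EuclideanSpace ℝ (Fin N × S) := fun u => L (g₀ u) with hgEdef
    have hfEapp : ∀ u p, fE u p = f₀ u p := fun _ _ => rfl
    have hgEapp : ∀ u p, gE u p = g₀ u p := fun _ _ => rfl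
    have hfd : ∀ τ ∈ Set.Icc (0:ℝ) t, HasDerivAt fE (gE τ) τ := by
      intro τ hτ
      have h0 : HasDerivAt f₀ (g₀ τ) τ :=
        hasDerivAt_pi.2 fun p => (hz τ hτ p.1 p.2).sub (hzhat τ hτ p.1 p.2)
      exact (L.toContinuousLinearMap.hasFDerivAt).comp_hasDerivAt τ h0
    have hfc : ContinuousOn fE (Set.Icc 0 t) := fun τ hτ =>
      ((hfd τ hτ).continuousAt).continuousWithinAt
    set ε : ℝ := Mi * cS ^ 2 * Real.sqrt (cS * N) * d with hεdef
    have hε0 : 0 ≤ ε :=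
      mul_nonneg (mul_nonneg (mul_nonneg hMi0 (sq_nonneg cS)) (Real.sqrt_nonneg _)) hd0
    -- continuity of trajectories on [0,t]
    have hzc : ∀ (i : Fin N) (s : S), ContinuousOn (fun u => z u i s) (Set.Icc 0 t) :=
      fun i s τ hτ => ((hz τ hτ i s).continuousAt).continuousWithinAt
    have hzhatc : ∀ (i : Fin N) (s : S), ContinuousOn (fun u => zhat u i s) (Set.Icc 0 t) :=
      fun i s τ hτ => ((hzhat τ hτ i s).continuousAt).continuousWithinAt
    have hRHSc : ∀ (B' : Matrix (Fin N) (Fin N) ℝ) (w : ℝ → Fin N → S → ℝ),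
        (∀ i s, ContinuousOn (fun u => w u i s) (Set.Icc (0:ℝ) t)) → ∀ (i : Fin N) (s : S),
        ContinuousOn (fun u => nimfaRHS qs qi B' (w u) i s) (Set.Icc (0:ℝ) t) := by
      intro B' w hwc i s
      unfold nimfaRHS
      apply ContinuousOn.add
      · exact continuousOn_finset_sum _ fun s' _ => continuousOn_const.mul (hwc i s')
      · exact continuousOn_finset_sum _ fun s' _ => continuousOn_finset_sum _ fun st _ =>
          (continuousOn_const.mul (hwc i s')).mul
            (continuousOn_finset_sum _ fun j _ => continuousOn_const.mul (hwc j st))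
    have hg₀c : ∀ p : Fin N × S, ContinuousOn (fun u => g₀ u p) (Set.Icc (0:ℝ) t) :=
      fun p => (hRHSc B z hzc p.1 p.2).sub (hRHSc Bhat zhat hzhatc p.1 p.2)
    have hzhat1 : ∀ u ∈ Set.Icc (0:ℝ) t, ∀ (j : Fin N) (st : S), |zhat u j st| ≤ 1 := by
      intro u hu j st
      have h := hzhat01 u hu j st
      rw [Set.mem_Icc] at h
      rw [abs_le]
      constructor <;> linarith [h.1, h.2]
    -- the key derivative estimate
    have hbound : ∀ u ∈ Set.Icc (0:ℝ) t, ‖gE u‖ ≤ K * ‖fE u‖ + ε := by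
      intro u hu
      set F : Fin N × S → ℝ := fun p => z u p.1 p.2 - zhat u p.1 p.2 with hFdef
      set P : Fin N → S → ℝ := fun i st => ∑ j, B i j * z u j st with hPdef
      set u₁ : (Fin N × S) → ℝ := fun p =>
        ∑ s', (qs s' p.2 + ∑ st, qi st s' p.2 * P p.1 st) * F (p.1, s') with hu₁def
      set u₂ : (Fin N × S) → ℝ := fun p =>
        ∑ s', ∑ st, qi st s' p.2 * zhat u p.1 s' * (∑ j, B p.1 j * F (j, st)) with hu₂def
      set u₃ : (Fin N × S) → ℝ := fun p =>
        ∑ s', ∑ st, qi st s' p.2 * zhat u p.1 s' * (∑ j, (B p.1 j - Bhat p.1 j) * zhat u j st)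
        with hu₃def
      set SF : ℝ := ∑ p : Fin N × S, F p ^ 2 with hSFdef
      -- decomposition of the derivative difference
      have hdecomp : ∀ p : Fin N × S, g₀ u p = u₁ p + u₂ p + u₃ p := by
        rintro ⟨i, s⟩
        show nimfaRHS qs qi B (z u) i s - nimfaRHS qs qi Bhat (zhat u) i s
          = u₁ (i, s) + u₂ (i, s) + u₃ (i, s)
        have hkey : ∀ s' st : S,
            qi st s' s * z u i s' * (∑ j, B i j * z u j st)
              - qi st s' s * zhat u i s' * (∑ j, Bhat i j * zhat u j st)
            = qi st s' s * P i st * F (i, s')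
              + (qi st s' s * zhat u i s' * (∑ j, B i j * F (j, st))
                + qi st s' s * zhat u i s' * (∑ j, (B i j - Bhat i j) * zhat u j st)) := by
          intro s' st
          have hj : (∑ j, B i j * F (j, st)) + (∑ j, (B i j - Bhat i j) * zhat u j st)
              = (∑ j, B i j * z u j st) - (∑ j, Bhat i j * zhat u j st) := by
            rw [← Finset.sum_add_distrib, ← Finset.sum_sub_distrib]
            refine Finset.sum_congr rfl fun j _ => ?_
            show B i j * (z u j st - zhat u j st) + (B i j - Bhat i j) * zhat u j st = _
            ring
          have hP' : P i st = ∑ j, B i j * z u j st := rfl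
          have hF' : F (i, s') = z u i s' - zhat u i s' := rfl
          rw [hP']
          linear_combination (-(qi st s' s * zhat u i s')) * hj
            + (-(qi st s' s * (∑ j, B i j * z u j st))) * hF'
        have l1 : (∑ s', qs s' s * z u i s') - (∑ s', qs s' s * zhat u i s')
            = ∑ s', qs s' s * F (i, s') := by
          rw [← Finset.sum_sub_distrib]
          refine Finset.sum_congr rfl fun s' _ => ?_
          show _ = qs s' s * (z u i s' - zhat u i s')
          ring
        have l2 : (∑ s' : S, ∑ st : S, qi st s' s * z u i s' * (∑ j, B i j * z u j st))
            - (∑ s' : S, ∑ st : S, qi st s' s * zhat u i s' * (∑ j, Bhat i j * zhat u j st))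
            = (∑ s' : S, ∑ st : S, qi st s' s * P i st * F (i, s'))
              + ((∑ s' : S, ∑ st : S, qi st s' s * zhat u i s' * (∑ j, B i j * F (j, st)))
                + ∑ s' : S, ∑ st : S,
                    qi st s' s * zhat u i s' * (∑ j, (B i j - Bhat i j) * zhat u j st)) := by
          simp only [← Finset.sum_sub_distrib, ← Finset.sum_add_distrib]
          exact Finset.sum_congr rfl fun s' _ => Finset.sum_congr rfl fun st _ => hkey s' st
        have hu1e : u₁ (i, s) = (∑ s', qs s' s * F (i, s'))
            + ∑ s' : S, ∑ st : S, qi st s' s * P i st * F (i, s') := by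
          show (∑ s', (qs s' s + ∑ st, qi st s' s * P i st) * F (i, s')) = _
          rw [← Finset.sum_add_distrib]
          refine Finset.sum_congr rfl fun s' _ => ?_
          rw [add_mul, Finset.sum_mul]
        have hu2e : u₂ (i, s) = ∑ s' : S, ∑ st : S,
            qi st s' s * zhat u i s' * (∑ j, B i j * F (j, st)) := rfl
        have hu3e : u₃ (i, s) = ∑ s' : S, ∑ st : S,
            qi st s' s * zhat u i s' * (∑ j, (B i j - Bhat i j) * zhat u j st) := rfl
        unfold nimfaRHS
        rw [hu1e, hu2e, hu3e]
        linarith [l1, l2]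
      -- coefficient bounds
      have hPb : ∀ (i : Fin N) (st : S), 0 ≤ P i st ∧ P i st ≤ C₀ := by
        intro i st
        constructor
        · exact Finset.sum_nonneg fun j _ => mul_nonneg (hB0 i j) (hz01 u hu j st).1
        · calc P i st ≤ ∑ j, B i j * 1 :=
              Finset.sum_le_sum fun j _ => mul_le_mul_of_nonneg_left (hz01 u hu j st).2 (hB0 i j)
          _ = ∑ j, B i j := by simp
          _ ≤ C₀ := hBrow i
      have hcoefb : ∀ (i : Fin N) (s s' : S), |qs s' s + ∑ st, qi st s' s * P i st| ≤ A := by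
        intro i s s'
        calc |qs s' s + ∑ st, qi st s' s * P i st|
            ≤ |qs s' s| + |∑ st, qi st s' s * P i st| := abs_add_le _ _
        _ ≤ Mq + ∑ st, |qi st s' s * P i st| :=
            add_le_add (hMqb s' s) (Finset.abs_sum_le_sum_abs _ _)
        _ ≤ Mq + ∑ _st : S, Mi * C₀ := by
            refine add_le_add_right (Finset.sum_le_sum fun st _ => ?_) Mq
            rw [abs_mul]
            have h1 := hPb i st
            have h2 : |P i st| ≤ C₀ := by rw [abs_of_nonneg h1.1]; exact h1.2
            exact mul_le_mul (hMib st s' s) h2 (abs_nonneg _) hMi0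
        _ = A := by
            rw [Finset.sum_const, Finset.card_univ, nsmul_eq_mul, hAdef, ← hcSdef]
            ring
      -- sum-of-squares bound for u₁
      have hQ1 : ∑ p : Fin N × S, u₁ p ^ 2 ≤ (cS * A) ^ 2 * SF := by
        have step1 : ∀ p : Fin N × S, u₁ p ^ 2 ≤ cS * A ^ 2 * ∑ s', F (p.1, s') ^ 2 := by
          intro p
          have h1 := sq_sum_le_card_mul_sum_sq (s := (Finset.univ : Finset S))
            (f := fun s' => (qs s' p.2 + ∑ st, qi st s' p.2 * P p.1 st) * F (p.1, s'))
          rw [Finset.card_univ, ← hcSdef] at h1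
          have h2 : ∑ s', ((qs s' p.2 + ∑ st, qi st s' p.2 * P p.1 st) * F (p.1, s')) ^ 2
              ≤ ∑ s', A ^ 2 * F (p.1, s') ^ 2 := by
            refine Finset.sum_le_sum fun s' _ => ?_
            rw [mul_pow]
            refine mul_le_mul_of_nonneg_right ?_ (sq_nonneg _)
            rw [← sq_abs]
            exact pow_le_pow_left₀ (abs_nonneg _) (hcoefb p.1 p.2 s') 2
          calc u₁ p ^ 2
              ≤ cS * ∑ s', ((qs s' p.2 + ∑ st, qi st s' p.2 * P p.1 st) * F (p.1, s')) ^ 2 := h1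
          _ ≤ cS * ∑ s', A ^ 2 * F (p.1, s') ^ 2 := mul_le_mul_of_nonneg_left h2 hcS0
          _ = cS * A ^ 2 * ∑ s', F (p.1, s') ^ 2 := by rw [← Finset.mul_sum]; ring
        calc ∑ p : Fin N × S, u₁ p ^ 2
            ≤ ∑ p : Fin N × S, cS * A ^ 2 * ∑ s', F (p.1, s') ^ 2 :=
            Finset.sum_le_sum fun p _ => step1 p
        _ = cS * A ^ 2 * ∑ p : Fin N × S, ∑ s', F (p.1, s') ^ 2 := by rw [← Finset.mul_sum]
        _ = cS * A ^ 2 * (cS * SF) := by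
            congr 1
            rw [Fintype.sum_prod_type]
            calc ∑ i : Fin N, ∑ _s : S, ∑ s' : S, F (i, s') ^ 2
                = ∑ i : Fin N, cS * ∑ s' : S, F (i, s') ^ 2 := by
                  refine Finset.sum_congr rfl fun i _ => ?_
                  rw [Finset.sum_const, Finset.card_univ, nsmul_eq_mul, ← hcSdef]
            _ = cS * ∑ i : Fin N, ∑ s' : S, F (i, s') ^ 2 := by rw [← Finset.mul_sum]
            _ = cS * SF := by rw [hSFdef, Fintype.sum_prod_type]
        _ = (cS * A) ^ 2 * SF := by ring
      -- generic double-sum Cauchy-Schwarz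
      have hdouble : ∀ (y : S → S → ℝ),
          (∑ s', ∑ st, y s' st) ^ 2 ≤ cS ^ 2 * ∑ s', ∑ st, (y s' st) ^ 2 := by
        intro y
        have h1 := sq_sum_le_card_mul_sum_sq (s := (Finset.univ : Finset S))
          (f := fun s' => ∑ st, y s' st)
        rw [Finset.card_univ, ← hcSdef] at h1
        have h2 : ∑ s', (∑ st, y s' st) ^ 2 ≤ ∑ s', cS * ∑ st, (y s' st) ^ 2 := by
          refine Finset.sum_le_sum fun s' _ => ?_
          have := sq_sum_le_card_mul_sum_sq (s := (Finset.univ : Finset S))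
            (f := fun st => y s' st)
          rwa [Finset.card_univ, ← hcSdef] at this
        calc (∑ s', ∑ st, y s' st) ^ 2 ≤ cS * ∑ s', (∑ st, y s' st) ^ 2 := h1
        _ ≤ cS * ∑ s', cS * ∑ st, (y s' st) ^ 2 := mul_le_mul_of_nonneg_left h2 hcS0
        _ = cS ^ 2 * ∑ s', ∑ st, (y s' st) ^ 2 := by rw [← Finset.mul_sum]; ring
      -- pointwise bound for the interaction terms
      have hy2 : ∀ (i : Fin N) (s' st : S) (V : ℝ) (q : ℝ), |q| ≤ Mi →
          (q * zhat u i s' * V) ^ 2 ≤ Mi ^ 2 * V ^ 2 := by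
        intro i s' st V q hq
        have h1 : |q * zhat u i s'| ≤ Mi := by
          rw [abs_mul]
          calc |q| * |zhat u i s'| ≤ Mi * 1 :=
            mul_le_mul hq (hzhat1 u hu i s') (abs_nonneg _) hMi0
          _ = Mi := mul_one Mi
        calc (q * zhat u i s' * V) ^ 2 = (q * zhat u i s') ^ 2 * V ^ 2 := by ring
        _ ≤ Mi ^ 2 * V ^ 2 := by
            refine mul_le_mul_of_nonneg_right ?_ (sq_nonneg _)
            rw [← sq_abs (q * zhat u i s')]
            exact pow_le_pow_left₀ (abs_nonneg _) h1 2
      -- generic bound for the two double-sum pieces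
      have hQgen : ∀ (V : Fin N → S → ℝ),
          ∑ p : Fin N × S,
              (∑ s' : S, ∑ st : S, qi st s' p.2 * zhat u p.1 s' * V p.1 st) ^ 2
            ≤ cS ^ 4 * Mi ^ 2 * ∑ st : S, ∑ i : Fin N, V i st ^ 2 := by
        intro V
        have step : ∀ p : Fin N × S,
            (∑ s' : S, ∑ st : S, qi st s' p.2 * zhat u p.1 s' * V p.1 st) ^ 2
              ≤ cS ^ 3 * Mi ^ 2 * ∑ st : S, V p.1 st ^ 2 := by
          intro p
          have h1 := hdouble (fun s' st => qi st s' p.2 * zhat u p.1 s' * V p.1 st)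
          have h2 : ∑ s' : S, ∑ st : S, (qi st s' p.2 * zhat u p.1 s' * V p.1 st) ^ 2
              ≤ ∑ s' : S, ∑ st : S, Mi ^ 2 * V p.1 st ^ 2 :=
            Finset.sum_le_sum fun s' _ => Finset.sum_le_sum fun st _ =>
              hy2 p.1 s' st (V p.1 st) (qi st s' p.2) (hMib st s' p.2)
          have h3 : ∑ s' : S, ∑ st : S, Mi ^ 2 * V p.1 st ^ 2
              = cS * (Mi ^ 2 * ∑ st : S, V p.1 st ^ 2) := by
            rw [← Finset.mul_sum]
            rw [Finset.sum_const, Finset.card_univ, nsmul_eq_mul, ← hcSdef]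
          calc (∑ s' : S, ∑ st : S, qi st s' p.2 * zhat u p.1 s' * V p.1 st) ^ 2
              ≤ cS ^ 2 * ∑ s' : S, ∑ st : S, (qi st s' p.2 * zhat u p.1 s' * V p.1 st) ^ 2 := h1
          _ ≤ cS ^ 2 * ∑ s' : S, ∑ st : S, Mi ^ 2 * V p.1 st ^ 2 :=
              mul_le_mul_of_nonneg_left h2 (by positivity)
          _ = cS ^ 3 * Mi ^ 2 * ∑ st : S, V p.1 st ^ 2 := by rw [h3]; ring
        calc ∑ p : Fin N × S,
            (∑ s' : S, ∑ st : S, qi st s' p.2 * zhat u p.1 s' * V p.1 st) ^ 2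
            ≤ ∑ p : Fin N × S, cS ^ 3 * Mi ^ 2 * ∑ st : S, V p.1 st ^ 2 :=
            Finset.sum_le_sum fun p _ => step p
        _ = cS ^ 3 * Mi ^ 2 * ∑ p : Fin N × S, ∑ st : S, V p.1 st ^ 2 := by
            rw [← Finset.mul_sum]
        _ = cS ^ 4 * Mi ^ 2 * ∑ st : S, ∑ i : Fin N, V i st ^ 2 := by
            rw [Fintype.sum_prod_type]
            have h4 : ∑ i : Fin N, ∑ _s : S, ∑ st : S, V i st ^ 2
                = cS * ∑ i : Fin N, ∑ st : S, V i st ^ 2 := by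
              rw [Finset.mul_sum]
              refine Finset.sum_congr rfl fun i _ => ?_
              rw [Finset.sum_const, Finset.card_univ, nsmul_eq_mul, ← hcSdef]
            rw [h4, Finset.sum_comm]
            ring
      -- sum-of-squares bound for u₂
      have hQ2 : ∑ p : Fin N × S, u₂ p ^ 2 ≤ (Mi * cS ^ 2 * (C₀ + 1)) ^ 2 * SF := by
        have h1 := hQgen (fun i st => ∑ j, B i j * F (j, st))
        have h2 : ∀ st : S, ∑ i : Fin N, (∑ j, B i j * F (j, st)) ^ 2
            ≤ opNorm2 B ^ 2 * ∑ j, F (j, st) ^ 2 :=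
          fun st => mulVec_sq_sum_le B (fun j => F (j, st))
        have h3 : ∑ st : S, ∑ i : Fin N, (∑ j, B i j * F (j, st)) ^ 2
            ≤ (C₀ + 1) ^ 2 * SF := by
          calc ∑ st : S, ∑ i : Fin N, (∑ j, B i j * F (j, st)) ^ 2
              ≤ ∑ st : S, opNorm2 B ^ 2 * ∑ j, F (j, st) ^ 2 :=
              Finset.sum_le_sum fun st _ => h2 st
          _ = opNorm2 B ^ 2 * ∑ st : S, ∑ j, F (j, st) ^ 2 := by rw [← Finset.mul_sum]
          _ ≤ (C₀ + 1) ^ 2 * ∑ st : S, ∑ j, F (j, st) ^ 2 := by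
              refine mul_le_mul_of_nonneg_right ?_ ?_
              · exact pow_le_pow_left₀ (opNorm2_nonneg B) hBop 2
              · exact Finset.sum_nonneg fun st _ => Finset.sum_nonneg fun j _ => sq_nonneg _
          _ = (C₀ + 1) ^ 2 * SF := by
              rw [hSFdef, Fintype.sum_prod_type, Finset.sum_comm]
        calc ∑ p : Fin N × S, u₂ p ^ 2
            ≤ cS ^ 4 * Mi ^ 2 * ∑ st : S, ∑ i : Fin N, (∑ j, B i j * F (j, st)) ^ 2 := h1
        _ ≤ cS ^ 4 * Mi ^ 2 * ((C₀ + 1) ^ 2 * SF) := by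
            refine mul_le_mul_of_nonneg_left h3 ?_
            positivity
        _ = (Mi * cS ^ 2 * (C₀ + 1)) ^ 2 * SF := by ring
      -- sum-of-squares bound for u₃
      have hQ3 : ∑ p : Fin N × S, u₃ p ^ 2 ≤ ε ^ 2 := by
        have h1 := hQgen (fun i st => ∑ j, (B i j - Bhat i j) * zhat u j st)
        have h2 : ∀ st : S, ∑ i : Fin N, (∑ j, (B i j - Bhat i j) * zhat u j st) ^ 2
            ≤ d ^ 2 * (N : ℝ) := by
          intro st
          have h3 := mulVec_sq_sum_le (B - Bhat) (fun j => zhat u j st)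
          simp only [Matrix.sub_apply] at h3
          rw [← hddef] at h3
          refine h3.trans ?_
          refine mul_le_mul_of_nonneg_left ?_ (sq_nonneg d)
          calc ∑ j : Fin N, zhat u j st ^ 2 ≤ ∑ _j : Fin N, (1:ℝ) := by
                refine Finset.sum_le_sum fun j _ => ?_
                rw [← sq_abs]
                exact pow_le_one₀ (abs_nonneg _) (hzhat1 u hu j st)
          _ = (N : ℝ) := by simp
        have h4 : ∑ st : S, ∑ i : Fin N, (∑ j, (B i j - Bhat i j) * zhat u j st) ^ 2
            ≤ cS * (d ^ 2 * (N : ℝ)) := by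
          calc ∑ st : S, ∑ i : Fin N, (∑ j, (B i j - Bhat i j) * zhat u j st) ^ 2
              ≤ ∑ _st : S, d ^ 2 * (N : ℝ) := Finset.sum_le_sum fun st _ => h2 st
          _ = cS * (d ^ 2 * (N : ℝ)) := by
              rw [Finset.sum_const, Finset.card_univ, nsmul_eq_mul, ← hcSdef]
        have hε2 : ε ^ 2 = cS ^ 4 * Mi ^ 2 * (cS * (d ^ 2 * (N : ℝ))) := by
          rw [hεdef]
          have hs : Real.sqrt (cS * N) ^ 2 = cS * N :=
            Real.sq_sqrt (mul_nonneg hcS0 (Nat.cast_nonneg N))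
          calc (Mi * cS ^ 2 * Real.sqrt (cS * N) * d) ^ 2
              = Mi ^ 2 * cS ^ 4 * Real.sqrt (cS * N) ^ 2 * d ^ 2 := by ring
          _ = cS ^ 4 * Mi ^ 2 * (cS * (d ^ 2 * (N : ℝ))) := by rw [hs]; ring
        calc ∑ p : Fin N × S, u₃ p ^ 2
            ≤ cS ^ 4 * Mi ^ 2 * ∑ st : S, ∑ i : Fin N,
              (∑ j, (B i j - Bhat i j) * zhat u j st) ^ 2 := h1
        _ ≤ cS ^ 4 * Mi ^ 2 * (cS * (d ^ 2 * (N : ℝ))) := by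
            refine mul_le_mul_of_nonneg_left h4 ?_
            positivity
        _ = ε ^ 2 := hε2.symm
      -- assemble the three pieces
      have hSF : SF = ‖fE u‖ ^ 2 := euclid_sq_sum (fE u)
      have hfn0 : (0:ℝ) ≤ ‖fE u‖ := norm_nonneg _
      have hU1 : ‖(L u₁ : EuclideanSpace ℝ (Fin N × S))‖ ≤ cS * A * ‖fE u‖ := by
        refine euclid_norm_le _ (mul_nonneg (mul_nonneg hcS0 hA0) hfn0) ?_
        calc ∑ p : Fin N × S, ((L u₁ : EuclideanSpace ℝ (Fin N × S)) p) ^ 2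
            = ∑ p : Fin N × S, u₁ p ^ 2 := rfl
        _ ≤ (cS * A) ^ 2 * SF := hQ1
        _ = (cS * A * ‖fE u‖) ^ 2 := by rw [hSF]; ring
      have hU2 : ‖(L u₂ : EuclideanSpace ℝ (Fin N × S))‖ ≤ Mi * cS ^ 2 * (C₀ + 1) * ‖fE u‖ := by
        refine euclid_norm_le _ ?_ ?_
        · have : (0:ℝ) ≤ Mi * cS ^ 2 * (C₀ + 1) :=
            mul_nonneg (mul_nonneg hMi0 (sq_nonneg cS)) (by linarith)
          exact mul_nonneg this hfn0
        calc ∑ p : Fin N × S, ((L u₂ : EuclideanSpace ℝ (Fin N × S)) p) ^ 2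
            = ∑ p : Fin N × S, u₂ p ^ 2 := rfl
        _ ≤ (Mi * cS ^ 2 * (C₀ + 1)) ^ 2 * SF := hQ2
        _ = (Mi * cS ^ 2 * (C₀ + 1) * ‖fE u‖) ^ 2 := by rw [hSF]; ring
      have hU3 : ‖(L u₃ : EuclideanSpace ℝ (Fin N × S))‖ ≤ ε := by
        refine euclid_norm_le _ hε0 ?_
        calc ∑ p : Fin N × S, ((L u₃ : EuclideanSpace ℝ (Fin N × S)) p) ^ 2
            = ∑ p : Fin N × S, u₃ p ^ 2 := rfl
        _ ≤ ε ^ 2 := hQ3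
      have hgsplit : gE u = (L u₁ + L u₂ + L u₃ : EuclideanSpace ℝ (Fin N × S)) := by
        have h1 : g₀ u = u₁ + u₂ + u₃ := by
          funext p
          exact hdecomp p
        show L (g₀ u) = _
        rw [h1, map_add, map_add]
      calc ‖gE u‖ ≤ ‖(L u₁ : EuclideanSpace ℝ (Fin N × S))‖
            + ‖(L u₂ : EuclideanSpace ℝ (Fin N × S))‖
            + ‖(L u₃ : EuclideanSpace ℝ (Fin N × S))‖ := by
              rw [hgsplit]
              exact norm_add₃_le
      _ ≤ cS * A * ‖fE u‖ + Mi * cS ^ 2 * (C₀ + 1) * ‖fE u‖ + ε :=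
          add_le_add (add_le_add hU1 hU2) hU3
      _ ≤ K * ‖fE u‖ + ε := by
          have h2 : (cS * A + Mi * cS ^ 2 * (C₀ + 1)) * ‖fE u‖ ≤ K * ‖fE u‖ := by
            refine mul_le_mul_of_nonneg_right ?_ hfn0
            rw [hKdef]
            linarith
          nlinarith [h2]
    -- Gronwall
    have hKne : K ≠ 0 := by linarith
    have hgron : ∀ τ ∈ Set.Icc (0:ℝ) t, ‖fE τ‖ ≤ gronwallBound 0 K ε (τ - 0) := by
      refine norm_le_gronwallBound_of_norm_deriv_right_le hfc
        (fun x hx => (hfd x (Set.Ico_subset_Icc_self hx)).hasDerivWithinAt) ?_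
        (fun x hx => hbound x (Set.Ico_subset_Icc_self hx))
      have h0 : fE 0 = 0 := by
        ext p
        show z 0 p.1 p.2 - zhat 0 p.1 p.2 = 0
        rw [hinit p.1 p.2]
        ring
      rw [h0, norm_zero]
    have hfbd : ∀ τ ∈ Set.Icc (0:ℝ) t, ‖fE τ‖ ≤ ε * Real.exp (K * t) := by
      intro τ hτ
      have h := hgron τ hτ
      rw [gronwallBound_of_K_ne_0 hKne] at h
      simp only [zero_mul, zero_add, sub_zero] at h
      refine h.trans ?_
      have h1 : Real.exp (K * τ) ≤ Real.exp (K * t) :=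
        Real.exp_le_exp.2 (mul_le_mul_of_nonneg_left hτ.2 hK0)
      have h2 : (1:ℝ) ≤ Real.exp (K * τ) := Real.one_le_exp (mul_nonneg hK0 hτ.1)
      have h3 : ε / K ≤ ε := div_le_self hε0 hK1
      have h4 : 0 ≤ ε / K := div_nonneg hε0 hK0
      exact mul_le_mul h3 (by linarith) (by linarith) hε0
    have hgbd : ∀ u ∈ Set.Icc (0:ℝ) t, ‖gE u‖ ≤ R * ε := by
      intro u hu
      have h1 := hbound u hu
      have h2 := hfbd u hu
      have h3 : K * ‖fE u‖ ≤ K * (ε * Real.exp (K * t)) := mul_le_mul_of_nonneg_left h2 hK0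
      calc ‖gE u‖ ≤ K * ‖fE u‖ + ε := h1
      _ ≤ K * (ε * Real.exp (K * t)) + ε := by linarith
      _ = R * ε := by rw [hRdef]; ring
    -- integral of |g|
    set gabs : ℝ → EuclideanSpace ℝ (Fin N × S) := fun u => L (fun p => |g₀ u p|) with hgabsdef
    have hgabsapp : ∀ u p, gabs u p = |g₀ u p| := fun _ _ => rfl
    have hgabsc : ContinuousOn gabs (Set.Icc (0:ℝ) t) := by
      refine L.continuous.comp_continuousOn ?_
      exact continuousOn_pi.2 fun p => (hg₀c p).abs
    have hgabs_int : IntervalIntegrable gabs MeasureTheory.volume 0 t := by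
      refine ContinuousOn.intervalIntegrable ?_
      rw [Set.uIcc_of_le ht.le]
      exact hgabsc
    set H : EuclideanSpace ℝ (Fin N × S) := ∫ u in (0:ℝ)..t, gabs u with hHdef
    have hHcomp : ∀ p : Fin N × S, H p = ∫ u in (0:ℝ)..t, |g₀ u p| := by
      intro p
      have h := ((EuclideanSpace.proj (𝕜 := ℝ) p).intervalIntegral_comp_comm hgabs_int).symm
      simpa [EuclideanSpace.proj, hgabsapp] using h
    have hcomp_int : ∀ p : Fin N × S,
        IntervalIntegrable (fun v => g₀ v p) MeasureTheory.volume 0 t := by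
      intro p
      refine ContinuousOn.intervalIntegrable ?_
      rw [Set.uIcc_of_le ht.le]
      exact hg₀c p
    have hHnorm : ‖H‖ ≤ R * ε * t := by
      have hb : ∀ x ∈ Set.uIoc (0:ℝ) t, ‖gabs x‖ ≤ R * ε := by
        intro x hx
        have hx' : x ∈ Set.Icc (0:ℝ) t := by
          rw [Set.uIoc_of_le ht.le] at hx
          exact Set.Ioc_subset_Icc_self hx
        have heq : ‖gabs x‖ = ‖gE x‖ := by
          rw [EuclideanSpace.norm_eq, EuclideanSpace.norm_eq]
          congr 1
          refine Finset.sum_congr rfl fun p _ => ?_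
          show ‖|g₀ x p|‖ ^ 2 = ‖gE x p‖ ^ 2
          rw [Real.norm_eq_abs, Real.norm_eq_abs, abs_abs]
          rfl
        rw [heq]
        exact hgbd x hx'
      have h := intervalIntegral.norm_integral_le_of_norm_le_const hb
      calc ‖H‖ ≤ R * ε * |t - 0| := h
      _ = R * ε * t := by rw [sub_zero, abs_of_nonneg ht.le]
    -- pointwise bound via FTC
    have hpt : ∀ τ ∈ Set.Icc (0:ℝ) t, ∀ (i : Fin N) (s : S),
        |z τ i s - zhat τ i s| ≤ H (i, s) := by
      intro τ hτ i s
      have hττ : Set.Icc (0:ℝ) τ ⊆ Set.Icc (0:ℝ) t := Set.Icc_subset_Icc le_rfl hτ.2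
      have hder : ∀ x ∈ Set.uIcc (0:ℝ) τ,
          HasDerivAt (fun v => z v i s - zhat v i s) (g₀ x (i, s)) x := by
        intro x hx
        rw [Set.uIcc_of_le hτ.1] at hx
        exact (hz x (hττ hx) i s).sub (hzhat x (hττ hx) i s)
      have hint : IntervalIntegrable (fun v => g₀ v (i, s)) MeasureTheory.volume 0 τ :=
        (hcomp_int (i, s)).mono_set
          (by rw [Set.uIcc_of_le hτ.1, Set.uIcc_of_le ht.le]; exact hττ)
      have heq := intervalIntegral.integral_eq_sub_of_hasDerivAt hder hint
      have heq2 : (∫ v in (0:ℝ)..τ, g₀ v (i, s)) = z τ i s - zhat τ i s := by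
        rw [heq]
        show z τ i s - zhat τ i s - (z 0 i s - zhat 0 i s) = _
        rw [hinit i s]
        ring
      calc |z τ i s - zhat τ i s| = |∫ v in (0:ℝ)..τ, g₀ v (i, s)| := by rw [heq2]
      _ ≤ ∫ v in (0:ℝ)..τ, |g₀ v (i, s)| :=
          intervalIntegral.abs_integral_le_integral_abs hτ.1
      _ ≤ ∫ v in (0:ℝ)..t, |g₀ v (i, s)| := by
          refine intervalIntegral.integral_mono_interval le_rfl hτ.1 hτ.2 ?_
            ((hcomp_int (i, s)).abs)
          exact Filter.Eventually.of_forall fun v => abs_nonneg _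
      _ = H (i, s) := (hHcomp (i, s)).symm
    have hHnn : ∀ p : Fin N × S, 0 ≤ H p := by
      intro p
      rw [hHcomp p]
      exact intervalIntegral.integral_nonneg ht.le fun v _ => abs_nonneg _
    -- conclusion
    have hfinal : ∀ i : Fin N,
        (⨆ τ : Set.Icc (0:ℝ) t, ⨆ s : S, |z τ i s - zhat τ i s|) ^ 2
          ≤ ∑ s : S, H (i, s) ^ 2 := by
      intro i
      have hsums_nn : (0:ℝ) ≤ ∑ s : S, H (i, s) ^ 2 :=
        Finset.sum_nonneg fun s _ => sq_nonneg _
      have h := iSup_sq_le (S := S) ht (fun τ s => z τ i s - zhat τ i s)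
        (c := Real.sqrt (∑ s : S, H (i, s) ^ 2)) ?_
      · rwa [Real.sq_sqrt hsums_nn] at h
      · intro τ hτ s
        show |z τ i s - zhat τ i s| ≤ _
        refine (hpt τ hτ i s).trans ?_
        refine Real.le_sqrt_of_sq_le ?_
        exact Finset.single_le_sum (f := fun s' => H (i, s') ^ 2)
          (fun s' _ => sq_nonneg _) (Finset.mem_univ s)
    have hsumH : ∑ i : Fin N, ∑ s : S, H (i, s) ^ 2 = ‖H‖ ^ 2 := by
      rw [← euclid_sq_sum H, Fintype.sum_prod_type]
    have hmain : ∑ i : Fin N,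
        (⨆ τ : Set.Icc (0:ℝ) t, ⨆ s : S, |z τ i s - zhat τ i s|) ^ 2 ≤ (R * ε * t) ^ 2 := by
      calc ∑ i : Fin N, (⨆ τ : Set.Icc (0:ℝ) t, ⨆ s : S, |z τ i s - zhat τ i s|) ^ 2
          ≤ ∑ i : Fin N, ∑ s : S, H (i, s) ^ 2 := Finset.sum_le_sum fun i _ => hfinal i
      _ = ‖H‖ ^ 2 := hsumH
      _ ≤ (R * ε * t) ^ 2 := by
          refine pow_le_pow_left₀ (norm_nonneg _) hHnorm 2
    have hεsq : ε ^ 2 = Mi ^ 2 * cS ^ 4 * (cS * (N : ℝ)) * d ^ 2 := by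
      rw [hεdef]
      have hs : Real.sqrt (cS * N) ^ 2 = cS * N :=
        Real.sq_sqrt (mul_nonneg hcS0 (Nat.cast_nonneg N))
      calc (Mi * cS ^ 2 * Real.sqrt (cS * N) * d) ^ 2
          = Mi ^ 2 * cS ^ 4 * Real.sqrt (cS * N) ^ 2 * d ^ 2 := by ring
      _ = Mi ^ 2 * cS ^ 4 * (cS * (N : ℝ)) * d ^ 2 := by rw [hs]
    calc (1 / (N:ℝ)) * ∑ i : Fin N,
        (⨆ τ : Set.Icc (0:ℝ) t, ⨆ s : S, |z τ i s - zhat τ i s|) ^ 2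
        ≤ (1 / (N:ℝ)) * (R * ε * t) ^ 2 := by
          refine mul_le_mul_of_nonneg_left hmain ?_
          positivity
    _ = t ^ 2 * R ^ 2 * Mi ^ 2 * cS ^ 5 * d ^ 2 := by
        rw [show (R * ε * t) ^ 2 = R ^ 2 * ε ^ 2 * t ^ 2 from by ring, hεsq]
        field_simp
    _ ≤ (t ^ 2 * R ^ 2 * Mi ^ 2 * cS ^ 5 + 1) * d ^ 2 := by nlinarith [sq_nonneg d]
end

section
/- Fix a finite state space S, rates q, a constant C₀ > 0 and a time horizon t > 0. There exists a constant C (depending only on S, the rates, C₀ and t) such that the following holds for every N: let B̂ be an N×N matrix with nonnegative entries and ‖B̂‖₂ ≤ C₀, and let ẑ, z̃ : [0,t] → ([0,1]^S)^N be two solutions of the NIMFA system with matrix B̂ (with possibly different initial conditions). Then, setting Δ̃*_i(t) = sup_{0 ≤ τ ≤ t} max_{s ∈ S} |ẑ_{i,s}(τ) − z̃_{i,s}(τ)|, one has (1/N)·Σ_{i=1}^{N} Δ̃*_i(t)² ≤ C·(1/N)·Σ_{i=1}^{N} max_{s ∈ S} (ẑ_{i,s}(0) − z̃_{i,s}(0))².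 -/
open Finset

set_option maxHeartbeats 1000000

lemma sign_mul_self_eq_abs (y : ℝ) : (SignType.sign y : ℝ) * y = |y| := by
  rcases lt_trichotomy y 0 with h | h | h
  · simp [sign_neg h, abs_of_neg h]
  · simp [h]
  · simp [sign_pos h, abs_of_pos h]

lemma abs_sign_le_one (y : ℝ) : |(SignType.sign y : ℝ)| ≤ 1 := by
  rcases lt_trichotomy y 0 with h | h | h
  · simp [sign_neg h]
  · simp [h]
  · simp [sign_pos h]

/-- ℓ¹ dissipativity of a transposed generator. -/
lemma dissip {S : Type*} [Fintype S] [DecidableEq S] (A : S → S → ℝ)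
    (hoff : ∀ s s', s' ≠ s → 0 ≤ A s s') (hcol : ∀ s', ∑ s, A s s' = 0)
    (Δ σ : S → ℝ) (hσ1 : ∀ s, |σ s| ≤ 1) (hσ2 : ∀ s, σ s * Δ s = |Δ s|) :
    ∑ s, σ s * (∑ s', A s s' * Δ s') ≤ 0 := by
  have swap : ∑ s, σ s * (∑ s', A s s' * Δ s') = ∑ s', ∑ s, σ s * (A s s' * Δ s') := by
    rw [Finset.sum_comm]
    exact Finset.sum_congr rfl fun s _ => by rw [Finset.mul_sum]
  rw [swap]
  apply Finset.sum_nonpos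
  intro s' _
  have hdiag : A s' s' = -∑ s ∈ Finset.univ.erase s', A s s' := by
    have := hcol s'
    rw [← Finset.add_sum_erase _ _ (Finset.mem_univ s')] at this
    linarith
  rw [← Finset.add_sum_erase _ _ (Finset.mem_univ s')]
  have h1 : σ s' * (A s' s' * Δ s') = A s' s' * |Δ s'| := by
    rw [← hσ2 s']; ring
  have h2 : ∀ s ∈ Finset.univ.erase s', σ s * (A s s' * Δ s') ≤ A s s' * |Δ s'| := by
    intro s hs
    have hA : 0 ≤ A s s' := hoff s s' (Finset.mem_erase.1 hs).1.symm
    calc σ s * (A s s' * Δ s') ≤ |σ s * (A s s' * Δ s')| := le_abs_self _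
      _ = |σ s| * (A s s' * |Δ s'|) := by rw [abs_mul, abs_mul, abs_of_nonneg hA]
      _ ≤ 1 * (A s s' * |Δ s'|) := by
          apply mul_le_mul_of_nonneg_right (hσ1 s) (by positivity)
      _ = A s s' * |Δ s'| := one_mul _
  calc σ s' * (A s' s' * Δ s') + ∑ s ∈ Finset.univ.erase s', σ s * (A s s' * Δ s')
      ≤ A s' s' * |Δ s'| + ∑ s ∈ Finset.univ.erase s', A s s' * |Δ s'| :=
        add_le_add h1.le (Finset.sum_le_sum h2)
    _ = (∑ s, A s s') * |Δ s'| := by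
        rw [← Finset.add_sum_erase _ _ (Finset.mem_univ s'), add_mul, Finset.sum_mul]
    _ = 0 := by rw [hcol s', zero_mul]

/-- Decomposition of the difference of two NIMFA right-hand sides. -/
lemma nimfa_diff {S : Type*} [Fintype S] {N : ℕ} (qs : S → S → ℝ) (qi : S → S → S → ℝ)
    (B : Matrix (Fin N) (Fin N) ℝ) (z1 z2 : Fin N → S → ℝ) (i : Fin N) (s : S) :
    nimfaRHS qs qi B z1 i s - nimfaRHS qs qi B z2 i s =
      (∑ s', (qs s' s + ∑ st, qi st s' s * (∑ j, B i j * z1 j st)) * (z1 i s' - z2 i s')) +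
      ∑ s', ∑ st, qi st s' s * z2 i s' * (∑ j, B i j * (z1 j st - z2 j st)) := by
  have hB : ∀ st, (∑ j, B i j * (z1 j st - z2 j st)) =
      (∑ j, B i j * z1 j st) - (∑ j, B i j * z2 j st) := by
    intro st
    rw [← Finset.sum_sub_distrib]
    exact Finset.sum_congr rfl fun j _ => by ring
  simp only [nimfaRHS, hB]
  rw [add_sub_add_comm, ← Finset.sum_sub_distrib, ← Finset.sum_sub_distrib,
    ← Finset.sum_add_distrib, ← Finset.sum_add_distrib]
  apply Finset.sum_congr rfl
  intro s' _
  rw [← Finset.sum_sub_distrib, add_mul, Finset.sum_mul, add_assoc, ← Finset.sum_add_distrib]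
  have : ∀ st ∈ Finset.univ,
      (qi st s' s * (∑ j, B i j * z1 j st)) * (z1 i s' - z2 i s') +
      qi st s' s * z2 i s' * ((∑ j, B i j * z1 j st) - (∑ j, B i j * z2 j st)) =
      qi st s' s * z1 i s' * (∑ j, B i j * z1 j st) -
      qi st s' s * z2 i s' * (∑ j, B i j * z2 j st) := by
    intro st _; ring
  rw [Finset.sum_congr rfl this]
  ring

noncomputable def en {N : ℕ} (v : Fin N → ℝ) : ℝ :=
  ‖(WithLp.equiv 2 (Fin N → ℝ)).symm v‖

lemma en_eq {N : ℕ} (v : Fin N → ℝ) : en v = Real.sqrt (∑ i, v i ^ 2) := by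
  rw [en, EuclideanSpace.norm_eq]
  congr 1
  exact Finset.sum_congr rfl fun i _ => by
    rw [WithLp.equiv_symm_apply, PiLp.toLp_apply, Real.norm_eq_abs, sq_abs]

lemma en_nonneg {N : ℕ} (v : Fin N → ℝ) : 0 ≤ en v := norm_nonneg _

lemma en_sq {N : ℕ} (v : Fin N → ℝ) (h : ∀ i, 0 ≤ v i) : en v ^ 2 = ∑ i, v i ^ 2 := by
  rw [en_eq, Real.sq_sqrt (Finset.sum_nonneg fun i _ => sq_nonneg _)]

lemma en_mono {N : ℕ} {v w : Fin N → ℝ} (h : ∀ i, |v i| ≤ w i) : en v ≤ en w := by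
  rw [en_eq, en_eq]
  apply Real.sqrt_le_sqrt
  apply Finset.sum_le_sum
  intro i _
  rw [← sq_abs (v i)]
  exact pow_le_pow_left₀ (abs_nonneg _) (h i) 2

lemma en_add_le {N : ℕ} (v w : Fin N → ℝ) : en (fun i => v i + w i) ≤ en v + en w := by
  have : (fun i => v i + w i) = v + w := rfl
  rw [en, this, WithLp.equiv_symm_apply, WithLp.toLp_add]
  exact norm_add_le _ _

lemma en_smul {N : ℕ} (c : ℝ) (v : Fin N → ℝ) (hc : 0 ≤ c) :
    en (fun i => c * v i) = c * en v := by
  have : (fun i => c * v i) = c • v := rfl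
  rw [en, this, WithLp.equiv_symm_apply, WithLp.toLp_smul, norm_smul, Real.norm_eq_abs, abs_of_nonneg hc, en,
    WithLp.equiv_symm_apply]

lemma en_mulVec_le {N : ℕ} (M : Matrix (Fin N) (Fin N) ℝ) (v : Fin N → ℝ) :
    en (M.mulVec v) ≤ opNorm2 M * en v := by
  rw [en, en, WithLp.equiv_symm_apply, ← Matrix.toEuclideanLin_apply_piLp_toLp]
  rw [opNorm2]
  have := (LinearMap.toContinuousLinearMap (Matrix.toEuclideanLin M)).le_opNorm
    ((WithLp.equiv 2 (Fin N → ℝ)).symm v)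
  rwa [LinearMap.coe_toContinuousLinearMap', WithLp.equiv_symm_apply] at this

lemma en_mulVec_apply {N : ℕ} (M : Matrix (Fin N) (Fin N) ℝ) (v : Fin N → ℝ) (i : Fin N) :
    M.mulVec v i = ∑ j, M i j * v j := rfl

lemma node_gronwall {S : Type*} [Fintype S] [DecidableEq S]
    (qs : S → S → ℝ) (qi : S → S → S → ℝ)
    (hqs : ∀ s' s, s' ≠ s → 0 ≤ qs s' s)
    (hqsd : ∀ s, qs s s = -∑ s' ∈ Finset.univ \ {s}, qs s s')
    (hqi : ∀ st s' s, s' ≠ s → 0 ≤ qi st s' s)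
    (hqid : ∀ st s, qi st s s = -∑ s' ∈ Finset.univ \ {s}, qi st s s')
    {N : ℕ} (B : Matrix (Fin N) (Fin N) ℝ) (hB : ∀ i j, 0 ≤ B i j)
    (t : ℝ) (zhat ztil : ℝ → Fin N → S → ℝ)
    (hz1 : ∀ τ ∈ Set.Icc (0:ℝ) t, ∀ i s, zhat τ i s ∈ Set.Icc (0:ℝ) 1)
    (hz2 : ∀ τ ∈ Set.Icc (0:ℝ) t, ∀ i s, ztil τ i s ∈ Set.Icc (0:ℝ) 1)
    (hd1 : ∀ τ ∈ Set.Icc (0:ℝ) t, ∀ i s,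
      HasDerivAt (fun u => zhat u i s) (nimfaRHS qs qi B (zhat τ) i s) τ)
    (hd2 : ∀ τ ∈ Set.Icc (0:ℝ) t, ∀ i s,
      HasDerivAt (fun u => ztil u i s) (nimfaRHS qs qi B (ztil τ) i s) τ)
    (i : Fin N) (a b : ℝ) (ha : 0 ≤ a) (hb : b ≤ t) (ε : ℝ)
    (hε : ∀ τ ∈ Set.Ico a b,
      (∑ s : S, ∑ s' : S, ∑ st : S, |qi st s' s|) *
        (∑ j, B i j * (∑ s, |zhat τ j s - ztil τ j s|)) ≤ ε) :
    ∀ τ ∈ Set.Icc a b, (∑ s, |zhat τ i s - ztil τ i s|) ≤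
      (∑ s, |zhat a i s - ztil a i s|) + ε * (τ - a) := by
  intro τ hτ
  have hab : a ≤ b := le_trans hτ.1 hτ.2
  have hsub : Set.Icc a b ⊆ Set.Icc 0 t := Set.Icc_subset_Icc ha hb
  set f : ℝ → ℝ := fun τ => ∑ s, |zhat τ i s - ztil τ i s| with hf_def
  -- continuity
  have hcont : ContinuousOn f (Set.Icc a b) := by
    apply continuousOn_finset_sum
    intro s _
    intro x hx
    have hxt : x ∈ Set.Icc (0:ℝ) t := hsub hx
    exact (((hd1 x hxt i s).sub (hd2 x hxt i s)).continuousAt.continuousWithinAt).abs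
  -- the liminf condition
  have hf' : ∀ x ∈ Set.Ico a b, ∀ r, (fun _ : ℝ => ε) x < r →
      ∃ᶠ z in nhdsWithin x (Set.Ioi x), (z - x)⁻¹ * (f z - f x) < r := by
    intro x hx r hr
    have hxt : x ∈ Set.Icc (0:ℝ) t := hsub (Set.Ico_subset_Icc_self hx)
    set d : S → ℝ := fun s =>
      nimfaRHS qs qi B (zhat x) i s - nimfaRHS qs qi B (ztil x) i s with hd_def
    have hder : ∀ s, HasDerivAt (fun τ => zhat τ i s - ztil τ i s) (d s) x :=
      fun s => (hd1 x hxt i s).sub (hd2 x hxt i s)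
    set σ : S → ℝ := fun s => if zhat x i s - ztil x i s = 0
      then (SignType.sign (d s) : ℝ) else (SignType.sign (zhat x i s - ztil x i s) : ℝ)
      with hσ_def
    -- per-state right-slope limits
    have hmono : nhdsWithin x (Set.Ioi x) ≤ nhdsWithin x {x}ᶜ :=
      nhdsWithin_mono x (fun z hz => ne_of_gt hz)
    have hslope : ∀ s, Filter.Tendsto
        (fun z => (z - x)⁻¹ * (|zhat z i s - ztil z i s| - |zhat x i s - ztil x i s|))
        (nhdsWithin x (Set.Ioi x)) (nhds (σ s * d s)) := by
      intro s
      have hsl : Filter.Tendsto (slope (fun τ => zhat τ i s - ztil τ i s) x)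
          (nhdsWithin x (Set.Ioi x)) (nhds (d s)) :=
        (hasDerivAt_iff_tendsto_slope.1 (hder s)).mono_left hmono
      by_cases h0 : zhat x i s - ztil x i s = 0
      · have : σ s * d s = |d s| := by
          rw [hσ_def]; simp only [h0, if_pos rfl]; exact sign_mul_self_eq_abs _
        rw [this]
        have habs := hsl.abs
        apply habs.congr'
        filter_upwards [self_mem_nhdsWithin] with z hz
        have hzx : 0 < z - x := sub_pos.2 hz
        rw [h0, abs_zero, sub_zero, slope_def_field, h0, sub_zero, div_eq_inv_mul,
          abs_mul, abs_of_nonneg (inv_nonneg.2 hzx.le)]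
      · have hab' : HasDerivAt (fun τ => |zhat τ i s - ztil τ i s|)
            ((SignType.sign (zhat x i s - ztil x i s) : ℝ) * d s) x := by
          have := (hasDerivAt_abs h0).comp x (hder s)
          exact this
        have : σ s * d s = (SignType.sign (zhat x i s - ztil x i s) : ℝ) * d s := by
          rw [hσ_def]; simp only [if_neg h0]
        rw [this]
        have hsl2 := (hasDerivAt_iff_tendsto_slope.1 hab').mono_left hmono
        apply hsl2.congr'
        filter_upwards [self_mem_nhdsWithin] with z hz
        rw [slope_def_field, div_eq_inv_mul]
    -- sum of slopes
    have hsum : Filter.Tendsto (fun z => (z - x)⁻¹ * (f z - f x))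
        (nhdsWithin x (Set.Ioi x)) (nhds (∑ s, σ s * d s)) := by
      have h1 := tendsto_finset_sum Finset.univ (fun s _ => hslope s)
      apply h1.congr
      intro z
      rw [hf_def]
      rw [← Finset.sum_sub_distrib, ← Finset.mul_sum]
    -- the limit is at most ε
    have hLε : (∑ s, σ s * d s) ≤ ε := by
      set lam : S → ℝ := fun st => ∑ j, B i j * zhat x j st with hlam_def
      set A : S → S → ℝ := fun s s' => qs s' s + ∑ st, qi st s' s * lam st with hA_def
      set rr : S → ℝ := fun s => ∑ s', ∑ st,
        qi st s' s * ztil x i s' * (∑ j, B i j * (zhat x j st - ztil x j st)) with hr_def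
      have hdecomp : ∀ s, d s = (∑ s', A s s' * (zhat x i s' - ztil x i s')) + rr s := by
        intro s
        rw [hd_def, hA_def, hr_def, hlam_def]
        exact nimfa_diff qs qi B (zhat x) (ztil x) i s
      have hσ1 : ∀ s, |σ s| ≤ 1 := by
        intro s; rw [hσ_def]
        by_cases h0 : zhat x i s - ztil x i s = 0
        · simp only [if_pos h0]; exact abs_sign_le_one _
        · simp only [if_neg h0]; exact abs_sign_le_one _
      have hσ2 : ∀ s, σ s * (zhat x i s - ztil x i s) = |zhat x i s - ztil x i s| := by
        intro s; rw [hσ_def]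
        by_cases h0 : zhat x i s - ztil x i s = 0
        · simp only [if_pos h0, h0, mul_zero, abs_zero]
        · simp only [if_neg h0]; exact sign_mul_self_eq_abs _
      have hlam_nonneg : ∀ st, 0 ≤ lam st := by
        intro st; rw [hlam_def]
        exact Finset.sum_nonneg fun j _ =>
          mul_nonneg (hB i j) (hz1 x hxt j st).1
      have hdis : ∑ s, σ s * (∑ s', A s s' * (zhat x i s' - ztil x i s')) ≤ 0 := by
        apply dissip A _ _ _ σ hσ1 hσ2
        · intro s s' hne
          rw [hA_def]
          exact add_nonneg (hqs s' s hne)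
            (Finset.sum_nonneg fun st _ => mul_nonneg (hqi st s' s hne) (hlam_nonneg st))
        · intro s'
          rw [hA_def]
          have colqs : ∑ s, qs s' s = 0 := by
            rw [← Finset.add_sum_erase _ _ (Finset.mem_univ s'), hqsd s', Finset.erase_eq]
            ring
          have colqi : ∀ st, ∑ s, qi st s' s = 0 := by
            intro st
            rw [← Finset.add_sum_erase _ _ (Finset.mem_univ s'), hqid st s', Finset.erase_eq]
            ring
          rw [Finset.sum_add_distrib, colqs, zero_add, Finset.sum_comm]
          rw [Finset.sum_congr rfl (fun st _ => (Finset.sum_mul _ _ _).symm)]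
          exact Finset.sum_eq_zero fun st _ => by rw [colqi st, zero_mul]
      have hrr : ∑ s, σ s * rr s ≤
          (∑ s : S, ∑ s' : S, ∑ st : S, |qi st s' s|) *
            (∑ j, B i j * (∑ s, |zhat x j s - ztil x j s|)) := by
        set w : ℝ := ∑ j, B i j * (∑ s, |zhat x j s - ztil x j s|) with hw_def
        have hw_nonneg : 0 ≤ w := Finset.sum_nonneg fun j _ =>
          mul_nonneg (hB i j) (Finset.sum_nonneg fun s _ => abs_nonneg _)
        have hrs : ∀ s, |rr s| ≤ (∑ s' : S, ∑ st : S, |qi st s' s|) * w := by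
          intro s
          rw [hr_def]
          calc |∑ s', ∑ st, qi st s' s * ztil x i s' * (∑ j, B i j * (zhat x j st - ztil x j st))|
              ≤ ∑ s', |∑ st, qi st s' s * ztil x i s' * (∑ j, B i j * (zhat x j st - ztil x j st))| :=
                Finset.abs_sum_le_sum_abs _ _
            _ ≤ ∑ s', ∑ st, |qi st s' s * ztil x i s' * (∑ j, B i j * (zhat x j st - ztil x j st))| :=
                Finset.sum_le_sum fun s' _ => Finset.abs_sum_le_sum_abs _ _
            _ ≤ ∑ s', ∑ st, |qi st s' s| * w := by
                apply Finset.sum_le_sum; intro s' _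
                apply Finset.sum_le_sum; intro st _
                rw [abs_mul, abs_mul]
                have h1 : |ztil x i s'| ≤ 1 := by
                  rw [abs_of_nonneg (hz2 x hxt i s').1]; exact (hz2 x hxt i s').2
                have h2 : |∑ j, B i j * (zhat x j st - ztil x j st)| ≤ w := by
                  calc |∑ j, B i j * (zhat x j st - ztil x j st)|
                      ≤ ∑ j, |B i j * (zhat x j st - ztil x j st)| := Finset.abs_sum_le_sum_abs _ _
                    _ ≤ w := by
                        rw [hw_def]
                        apply Finset.sum_le_sum; intro j _
                        rw [abs_mul, abs_of_nonneg (hB i j)]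
                        apply mul_le_mul_of_nonneg_left _ (hB i j)
                        exact Finset.single_le_sum (f := fun s => |zhat x j s - ztil x j s|) (fun s _ => abs_nonneg _) (Finset.mem_univ st)
                calc |qi st s' s| * |ztil x i s'| * |∑ j, B i j * (zhat x j st - ztil x j st)|
                    ≤ |qi st s' s| * 1 * w := by
                      apply mul_le_mul (mul_le_mul_of_nonneg_left h1 (abs_nonneg _)) h2
                        (abs_nonneg _) (by positivity)
                  _ = |qi st s' s| * w := by ring
            _ = (∑ s' : S, ∑ st : S, |qi st s' s|) * w := by
                rw [Finset.sum_mul]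
                exact Finset.sum_congr rfl fun s' _ => (Finset.sum_mul _ _ _).symm
        calc ∑ s, σ s * rr s ≤ ∑ s, |rr s| := by
              apply Finset.sum_le_sum; intro s _
              calc σ s * rr s ≤ |σ s * rr s| := le_abs_self _
                _ = |σ s| * |rr s| := abs_mul _ _
                _ ≤ 1 * |rr s| := mul_le_mul_of_nonneg_right (hσ1 s) (abs_nonneg _)
                _ = |rr s| := one_mul _
          _ ≤ ∑ s, (∑ s' : S, ∑ st : S, |qi st s' s|) * w :=
              Finset.sum_le_sum fun s _ => hrs s
          _ = (∑ s : S, ∑ s' : S, ∑ st : S, |qi st s' s|) * w := by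
              rw [Finset.sum_mul]
      calc ∑ s, σ s * d s
          = (∑ s, σ s * (∑ s', A s s' * (zhat x i s' - ztil x i s'))) + ∑ s, σ s * rr s := by
            rw [← Finset.sum_add_distrib]
            exact Finset.sum_congr rfl fun s _ => by rw [hdecomp s]; ring
        _ ≤ 0 + (∑ s : S, ∑ s' : S, ∑ st : S, |qi st s' s|) *
              (∑ j, B i j * (∑ s, |zhat x j s - ztil x j s|)) := add_le_add hdis hrr
        _ ≤ ε := by rw [zero_add]; exact hε x hx
    have hlt : (∑ s, σ s * d s) < r := lt_of_le_of_lt hLε hr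
    exact (hsum.eventually_lt_const hlt).frequently
  have hbound : ∀ x ∈ Set.Ico a b, (fun _ : ℝ => ε) x ≤ 0 * f x + ε := by
    intro x _; simp
  have := le_gronwallBound_of_liminf_deriv_right_le hcont hf' le_rfl hbound τ hτ
  rwa [gronwallBound_K0] at this

/-- Fix a finite state space `S`, rates `q`, a constant `C₀ > 0` and a time
horizon `t > 0`.  There is a constant `C` (depending only on `S`, the rates, `C₀` and `t`) such
that for all `N`, every nonnegative `N×N` matrix `B̂` with `‖B̂‖₂ ≤ C₀`, and any two
`[0,1]`-valued solutions `ẑ, z̃` of the NIMFA system with matrix `B̂` (possibly different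
initial conditions), one has
`(1/N)·Σ_i (sup_{0≤τ≤t} max_s |ẑ_{i,s}(τ) − z̃_{i,s}(τ)|)² ≤ C·(1/N)·Σ_i max_s (ẑ_{i,s}(0) − z̃_{i,s}(0))²`. -/
theorem stmt_3 (S : Type) [Fintype S] [DecidableEq S] [Nonempty S]
    (qs : S → S → ℝ) (qi : S → S → S → ℝ)
    (hqs : ∀ s' s, s' ≠ s → 0 ≤ qs s' s)
    (hqsd : ∀ s, qs s s = -∑ s' ∈ Finset.univ \ {s}, qs s s')
    (hqi : ∀ st s' s, s' ≠ s → 0 ≤ qi st s' s)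
    (hqid : ∀ st s, qi st s s = -∑ s' ∈ Finset.univ \ {s}, qi st s s')
    (C₀ t : ℝ) (hC₀ : 0 < C₀) (ht : 0 < t) :
    ∃ C : ℝ, 0 < C ∧
      ∀ (N : ℕ) (Bhat : Matrix (Fin N) (Fin N) ℝ),
        (∀ i j, 0 ≤ Bhat i j) → opNorm2 Bhat ≤ C₀ →
        ∀ (zhat ztil : ℝ → Fin N → S → ℝ),
        -- the trajectories take values in [0,1]
        (∀ τ ∈ Set.Icc (0:ℝ) t, ∀ i s, zhat τ i s ∈ Set.Icc (0:ℝ) 1) →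
        (∀ τ ∈ Set.Icc (0:ℝ) t, ∀ i s, ztil τ i s ∈ Set.Icc (0:ℝ) 1) →
        -- both solve NIMFA with matrix `Bhat`
        (∀ τ ∈ Set.Icc (0:ℝ) t, ∀ i s,
          HasDerivAt (fun u => zhat u i s) (nimfaRHS qs qi Bhat (zhat τ) i s) τ) →
        (∀ τ ∈ Set.Icc (0:ℝ) t, ∀ i s,
          HasDerivAt (fun u => ztil u i s) (nimfaRHS qs qi Bhat (ztil τ) i s) τ) →
        (1 / N) * ∑ i,
            (⨆ τ : Set.Icc (0:ℝ) t, ⨆ s : S, |zhat τ i s - ztil τ i s|) ^ 2 ≤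
          C * ((1 / N) * ∑ i, (⨆ s : S, (zhat 0 i s - ztil 0 i s) ^ 2)) := by
  classical
  set K : ℝ := ∑ s : S, ∑ s' : S, ∑ st : S, |qi st s' s| with hK_def
  have hK0 : 0 ≤ K := Finset.sum_nonneg fun _ _ => Finset.sum_nonneg fun _ _ =>
    Finset.sum_nonneg fun _ _ => abs_nonneg _
  set m : ℕ := ⌈2 * (t * (K * C₀))⌉₊ + 1 with hm_def
  have hm0 : 0 < m := Nat.succ_pos _
  have hmR : (0:ℝ) < m := Nat.cast_pos.2 hm0
  set h : ℝ := t / m with hh_def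
  have hh0 : 0 < h := div_pos ht hmR
  have hmh : (m:ℝ) * h = t := by
    rw [hh_def]; field_simp
  have hhalf : h * (K * C₀) ≤ 1 / 2 := by
    have h1 : 2 * (t * (K * C₀)) ≤ (m:ℝ) := by
      calc 2 * (t * (K * C₀)) ≤ (⌈2 * (t * (K * C₀))⌉₊ : ℝ) := Nat.le_ceil _
        _ ≤ (m:ℝ) := by rw [hm_def]; push_cast; linarith
    rw [hh_def, div_mul_eq_mul_div, div_le_div_iff₀ hmR (by norm_num : (0:ℝ) < 2)]
    linarith
  set card : ℝ := (Fintype.card S : ℝ) with hcard_def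
  have hcard0 : 0 < card := by
    rw [hcard_def]; exact_mod_cast Fintype.card_pos
  refine ⟨card ^ 2 * ((m:ℝ) * 4 ^ (m+1)) + 1, by positivity, ?_⟩
  intro N Bhat hB hBn zhat ztil hz1 hz2 hd1 hd2
  set u : ℝ → Fin N → ℝ := fun τ i => ∑ s, |zhat τ i s - ztil τ i s| with hu_def
  have hu_nonneg : ∀ τ i, 0 ≤ u τ i := fun τ i =>
    Finset.sum_nonneg fun s _ => abs_nonneg _
  have habs1 : ∀ τ ∈ Set.Icc (0:ℝ) t, ∀ i s, |zhat τ i s - ztil τ i s| ≤ 1 := by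
    intro τ hτ i s
    have h1 := hz1 τ hτ i s
    have h2 := hz2 τ hτ i s
    rw [abs_sub_le_iff]
    constructor <;> [linarith [h1.2, h2.1]; linarith [h1.1, h2.2]]
  have hu_bdd : ∀ τ ∈ Set.Icc (0:ℝ) t, ∀ i, u τ i ≤ card := by
    intro τ hτ i
    rw [hu_def, hcard_def]
    calc ∑ s, |zhat τ i s - ztil τ i s| ≤ ∑ _s : S, (1:ℝ) :=
          Finset.sum_le_sum fun s _ => habs1 τ hτ i s
      _ = (Fintype.card S : ℝ) := by simp
  -- the piecewise suprema
  set P : ℕ → Fin N → ℝ := fun k i =>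
    ⨆ τ : Set.Icc ((k:ℝ)*h) ((k:ℝ)*h + h), u τ i with hP_def
  have hIccSub : ∀ k : ℕ, k < m → Set.Icc ((k:ℝ)*h) ((k:ℝ)*h + h) ⊆ Set.Icc (0:ℝ) t := by
    intro k hk
    apply Set.Icc_subset_Icc
    · positivity
    · have : (k:ℝ) + 1 ≤ m := by exact_mod_cast hk
      calc (k:ℝ)*h + h = ((k:ℝ)+1)*h := by ring
        _ ≤ (m:ℝ)*h := by nlinarith
        _ = t := hmh
  have hne : ∀ k : ℕ, ((k:ℝ)*h) ≤ ((k:ℝ)*h + h) := fun k => by linarith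
  have hP_bddAbove : ∀ k : ℕ, k < m → ∀ i,
      BddAbove (Set.range fun τ : Set.Icc ((k:ℝ)*h) ((k:ℝ)*h + h) => u τ i) := by
    intro k hk i
    refine ⟨card, ?_⟩
    rintro x ⟨τ, rfl⟩
    exact hu_bdd τ (hIccSub k hk τ.2) i
  have hP_ge : ∀ k : ℕ, k < m → ∀ i, ∀ τ ∈ Set.Icc ((k:ℝ)*h) ((k:ℝ)*h + h), u τ i ≤ P k i := by
    intro k hk i τ hτ
    exact le_ciSup (hP_bddAbove k hk i) (⟨τ, hτ⟩ : Set.Icc ((k:ℝ)*h) ((k:ℝ)*h + h))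
  have hP_nonneg : ∀ k : ℕ, k < m → ∀ i, 0 ≤ P k i := by
    intro k hk i
    exact le_trans (hu_nonneg ((k:ℝ)*h) i)
      (hP_ge k hk i _ ⟨le_refl _, hne k⟩)
  -- per-piece bound via node_gronwall
  have hP_le : ∀ k : ℕ, k < m → ∀ i,
      P k i ≤ u ((k:ℝ)*h) i + h * (K * (∑ j, Bhat i j * P k j)) := by
    intro k hk i
    haveI : Nonempty (Set.Icc ((k:ℝ)*h) ((k:ℝ)*h + h)) :=
      Set.nonempty_Icc.2 (hne k) |>.to_subtype
    apply ciSup_le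
    rintro ⟨τ, hτ⟩
    have hεnn : 0 ≤ K * (∑ j, Bhat i j * P k j) :=
      mul_nonneg hK0 (Finset.sum_nonneg fun j _ => mul_nonneg (hB i j) (hP_nonneg k hk j))
    have key := node_gronwall qs qi hqs hqsd hqi hqid Bhat hB t zhat ztil hz1 hz2 hd1 hd2
      i ((k:ℝ)*h) ((k:ℝ)*h + h) (by positivity) (hIccSub k hk ⟨hne k, le_refl _⟩).2
      (K * (∑ j, Bhat i j * P k j)) ?_ τ hτ
    · calc u τ i ≤ u ((k:ℝ)*h) i + K * (∑ j, Bhat i j * P k j) * (τ - (k:ℝ)*h) := key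
        _ ≤ u ((k:ℝ)*h) i + h * (K * (∑ j, Bhat i j * P k j)) := by
            have : τ - (k:ℝ)*h ≤ h := by linarith [hτ.2]
            nlinarith [hεnn]
    · intro τ' hτ'
      rw [← hK_def]
      apply mul_le_mul_of_nonneg_left _ hK0
      apply Finset.sum_le_sum
      intro j _
      apply mul_le_mul_of_nonneg_left _ (hB i j)
      exact hP_ge k hk j τ' (Set.Ico_subset_Icc_self hτ')
  -- Euclidean norm recursion per piece
  have hen_rec : ∀ k : ℕ, k < m → en (P k) ≤ 2 * en (u ((k:ℝ)*h)) := by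
    intro k hk
    have hhk : (0:ℝ) ≤ h * K := by positivity
    have step1 : en (P k) ≤ en (u ((k:ℝ)*h)) + (h * K) * en (Bhat.mulVec (P k)) := by
      calc en (P k) ≤ en (fun i => u ((k:ℝ)*h) i + (h * K) * Bhat.mulVec (P k) i) := by
            apply en_mono
            intro i
            rw [abs_of_nonneg (hP_nonneg k hk i)]
            calc P k i ≤ u ((k:ℝ)*h) i + h * (K * (∑ j, Bhat i j * P k j)) := hP_le k hk i
              _ = u ((k:ℝ)*h) i + (h*K) * Bhat.mulVec (P k) i := by
                  rw [en_mulVec_apply]; ring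
        _ ≤ en (u ((k:ℝ)*h)) + en (fun i => (h * K) * Bhat.mulVec (P k) i) := en_add_le _ _
        _ = en (u ((k:ℝ)*h)) + (h*K) * en (Bhat.mulVec (P k)) := by
            rw [en_smul _ _ hhk]
    have step2 : en (Bhat.mulVec (P k)) ≤ C₀ * en (P k) :=
      le_trans (en_mulVec_le _ _) (mul_le_mul_of_nonneg_right hBn (en_nonneg _))
    nlinarith [mul_le_mul_of_nonneg_left step2 hhk,
      mul_le_mul_of_nonneg_right hhalf (en_nonneg (P k)), en_nonneg (P k)]
  -- iterate over the pieces
  have hchain : ∀ k : ℕ, k < m → en (P k) ≤ 2^(k+1) * en (u 0) := by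
    intro k
    induction k with
    | zero =>
      intro hk
      have := hen_rec 0 hk
      norm_num at this ⊢
      exact this
    | succ n ih =>
      intro hk
      have hn : n < m := Nat.lt_of_succ_lt hk
      have h1 : en (u ((((n+1:ℕ)):ℝ)*h)) ≤ en (P n) := by
        apply en_mono; intro i
        rw [abs_of_nonneg (hu_nonneg _ i)]
        apply hP_ge n hn i
        constructor
        · push_cast; nlinarith [hh0.le]
        · push_cast; linarith
      calc en (P (n+1)) ≤ 2 * en (u ((((n+1:ℕ)):ℝ)*h)) := hen_rec (n+1) hk
        _ ≤ 2 * en (P n) := by linarith [h1]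
        _ ≤ 2 * (2^(n+1) * en (u 0)) := by linarith [ih hn]
        _ = 2^(n+1+1) * en (u 0) := by ring
  -- pointwise square bound on the supremum
  have h0t : (0:ℝ) ∈ Set.Icc (0:ℝ) t := ⟨le_refl _, ht.le⟩
  haveI : Nonempty (Set.Icc (0:ℝ) t) := ⟨⟨0, h0t⟩⟩
  obtain ⟨s0⟩ := ‹Nonempty S›
  have hrange_ne : (Finset.range m).Nonempty := ⟨0, Finset.mem_range.2 hm0⟩
  have hineq1 : ∀ i, (⨆ τ : Set.Icc (0:ℝ) t, ⨆ s : S, |zhat τ i s - ztil τ i s|) ^ 2 ≤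
      ∑ k ∈ Finset.range m, (P k i)^2 := by
    intro i
    set M : ℝ := (Finset.range m).sup' hrange_ne (fun k => P k i) with hM_def
    have hLM : (⨆ τ : Set.Icc (0:ℝ) t, ⨆ s : S, |zhat τ i s - ztil τ i s|) ≤ M := by
      apply ciSup_le
      intro τ
      set k : ℕ := min (⌊(τ:ℝ)/h⌋₊) (m-1) with hk_def
      have hkm : k < m := lt_of_le_of_lt (min_le_right _ _) (Nat.pred_lt hm0.ne')
      have hτ0 : (0:ℝ) ≤ (τ:ℝ) := τ.2.1
      have hmem : (τ:ℝ) ∈ Set.Icc ((k:ℝ)*h) ((k:ℝ)*h + h) := by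
        constructor
        · have hk1 : (k:ℝ) ≤ ((⌊(τ:ℝ)/h⌋₊ : ℕ) : ℝ) := by
            exact_mod_cast min_le_left _ _
          have hk2 : ((⌊(τ:ℝ)/h⌋₊ : ℕ) : ℝ) ≤ (τ:ℝ)/h := Nat.floor_le (by positivity)
          calc (k:ℝ)*h ≤ ((τ:ℝ)/h)*h := by nlinarith
            _ = (τ:ℝ) := by field_simp
        · by_cases hcase : ⌊(τ:ℝ)/h⌋₊ ≤ m - 1
          · have hkeq : k = ⌊(τ:ℝ)/h⌋₊ := min_eq_left hcase
            have := Nat.lt_floor_add_one ((τ:ℝ)/h)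
            have h2 : (τ:ℝ)/h < (k:ℝ) + 1 := by rw [hkeq]; exact_mod_cast this
            have := (div_lt_iff₀ hh0).1 h2
            linarith
          · have hkeq : k = m - 1 := min_eq_right (le_of_not_ge hcase)
            have hcast : ((k:ℝ) + 1) = (m:ℝ) := by
              rw [hkeq]
              have : (m - 1) + 1 = m := Nat.succ_pred_eq_of_pos hm0
              exact_mod_cast congrArg (Nat.cast : ℕ → ℝ) this
            have : (τ:ℝ) ≤ t := τ.2.2
            calc (τ:ℝ) ≤ t := this
              _ = (m:ℝ)*h := hmh.symm
              _ = ((k:ℝ)+1)*h := by rw [hcast]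
              _ = (k:ℝ)*h + h := by ring
      calc (⨆ s : S, |zhat τ i s - ztil τ i s|) ≤ u (τ:ℝ) i := by
            apply ciSup_le
            intro s
            exact Finset.single_le_sum (f := fun s => |zhat (τ:ℝ) i s - ztil (τ:ℝ) i s|)
              (fun s _ => abs_nonneg _) (Finset.mem_univ s)
        _ ≤ P k i := hP_ge k hkm i _ hmem
        _ ≤ M := Finset.le_sup' (fun k => P k i) (Finset.mem_range.2 hkm)
    have hL0 : (0:ℝ) ≤ ⨆ τ : Set.Icc (0:ℝ) t, ⨆ s : S, |zhat τ i s - ztil τ i s| := by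
      have hbdd : BddAbove (Set.range fun τ : Set.Icc (0:ℝ) t =>
          ⨆ s : S, |zhat τ i s - ztil τ i s|) := by
        refine ⟨card, ?_⟩
        rintro x ⟨τ, rfl⟩
        apply ciSup_le
        intro s
        calc |zhat τ i s - ztil τ i s| ≤ 1 := habs1 τ τ.2 i s
          _ ≤ card := by rw [hcard_def]; exact_mod_cast Fintype.card_pos
      have h1 : (0:ℝ) ≤ ⨆ s : S, |zhat (0:ℝ) i s - ztil (0:ℝ) i s| :=
        le_trans (abs_nonneg _) (le_ciSup (f := fun s => |zhat (0:ℝ) i s - ztil (0:ℝ) i s|) (Set.Finite.bddAbove (Set.finite_range _)) s0)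
      exact le_trans h1 (le_ciSup hbdd (⟨0, h0t⟩ : Set.Icc (0:ℝ) t))
    have hM2 : M^2 ≤ ∑ k ∈ Finset.range m, (P k i)^2 := by
      obtain ⟨k', hk'mem, hk'eq⟩ := Finset.exists_mem_eq_sup' hrange_ne (fun k => P k i)
      rw [hM_def, hk'eq]
      exact Finset.single_le_sum (f := fun k => P k i ^ 2) (fun k _ => sq_nonneg _) hk'mem
    calc (⨆ τ : Set.Icc (0:ℝ) t, ⨆ s : S, |zhat τ i s - ztil τ i s|) ^ 2 ≤ M^2 :=
          pow_le_pow_left₀ hL0 hLM 2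
      _ ≤ ∑ k ∈ Finset.range m, (P k i)^2 := hM2
  -- aggregate over i
  have hineq2 : ∑ i, (⨆ τ : Set.Icc (0:ℝ) t, ⨆ s : S, |zhat τ i s - ztil τ i s|) ^ 2 ≤
      (m:ℝ) * 4^(m+1) * en (u 0)^2 := by
    calc ∑ i, (⨆ τ : Set.Icc (0:ℝ) t, ⨆ s : S, |zhat τ i s - ztil τ i s|) ^ 2
        ≤ ∑ i, ∑ k ∈ Finset.range m, (P k i)^2 := Finset.sum_le_sum fun i _ => hineq1 i
      _ = ∑ k ∈ Finset.range m, ∑ i, (P k i)^2 := Finset.sum_comm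
      _ = ∑ k ∈ Finset.range m, en (P k)^2 := by
          apply Finset.sum_congr rfl
          intro k hk
          rw [en_sq (P k) (hP_nonneg k (Finset.mem_range.1 hk))]
      _ ≤ ∑ k ∈ Finset.range m, (4:ℝ)^(m+1) * en (u 0)^2 := by
          apply Finset.sum_le_sum
          intro k hk
          have hk' : k < m := Finset.mem_range.1 hk
          have h1 : en (P k)^2 ≤ (2^(k+1) * en (u 0))^2 :=
            pow_le_pow_left₀ (en_nonneg _) (hchain k hk') 2
          have h2 : ((2:ℝ)^(k+1))^2 = 4^(k+1) := by
            rw [← pow_mul, mul_comm, pow_mul]; norm_num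
          have h3 : (4:ℝ)^(k+1) ≤ 4^(m+1) :=
            pow_le_pow_right₀ (by norm_num) (by omega)
          calc en (P k)^2 ≤ (2^(k+1) * en (u 0))^2 := h1
            _ = 4^(k+1) * en (u 0)^2 := by rw [mul_pow, h2]
            _ ≤ 4^(m+1) * en (u 0)^2 := mul_le_mul_of_nonneg_right h3 (sq_nonneg _)
      _ = (m:ℝ) * 4^(m+1) * en (u 0)^2 := by
          rw [Finset.sum_const, Finset.card_range]; push_cast; ring
  -- initial data bound
  have hinit : en (u 0)^2 ≤ card^2 * ∑ i, (⨆ s : S, (zhat 0 i s - ztil 0 i s) ^ 2) := by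
    rw [en_sq (u 0) (hu_nonneg 0), Finset.mul_sum]
    apply Finset.sum_le_sum
    intro i _
    have hsum_sq : (u 0 i)^2 ≤ card * ∑ s, (zhat 0 i s - ztil 0 i s)^2 := by
      rw [hu_def, hcard_def]
      have := sq_sum_le_card_mul_sum_sq
        (s := (Finset.univ : Finset S)) (f := fun s => |zhat 0 i s - ztil 0 i s|)
      simp only [sq_abs] at this
      simpa using this
    have hsup : ∑ s, (zhat 0 i s - ztil 0 i s)^2 ≤
        card * (⨆ s : S, (zhat 0 i s - ztil 0 i s) ^ 2) := by
      calc ∑ s, (zhat 0 i s - ztil 0 i s)^2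
          ≤ ∑ _s : S, (⨆ s : S, (zhat 0 i s - ztil 0 i s) ^ 2) := by
            apply Finset.sum_le_sum
            intro s _
            exact le_ciSup (f := fun s => (zhat 0 i s - ztil 0 i s) ^ 2)
              (Set.Finite.bddAbove (Set.finite_range _)) s
        _ = card * (⨆ s : S, (zhat 0 i s - ztil 0 i s) ^ 2) := by
            rw [Finset.sum_const, nsmul_eq_mul, Finset.card_univ, hcard_def]
    calc (u 0 i)^2 ≤ card * ∑ s, (zhat 0 i s - ztil 0 i s)^2 := hsum_sq
      _ ≤ card * (card * (⨆ s : S, (zhat 0 i s - ztil 0 i s) ^ 2)) :=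
          mul_le_mul_of_nonneg_left hsup hcard0.le
      _ = card^2 * (⨆ s : S, (zhat 0 i s - ztil 0 i s) ^ 2) := by ring
  -- conclude
  have hR0 : (0:ℝ) ≤ ∑ i, (⨆ s : S, (zhat 0 i s - ztil 0 i s) ^ 2) := by
    apply Finset.sum_nonneg
    intro i _
    exact le_trans (sq_nonneg (zhat 0 i s0 - ztil 0 i s0)) (le_ciSup (f := fun s => (zhat 0 i s - ztil 0 i s) ^ 2) (Set.Finite.bddAbove (Set.finite_range _)) s0)
  have hfinal : ∑ i, (⨆ τ : Set.Icc (0:ℝ) t, ⨆ s : S, |zhat τ i s - ztil τ i s|) ^ 2 ≤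
      (card ^ 2 * ((m:ℝ) * 4 ^ (m+1))) * ∑ i, (⨆ s : S, (zhat 0 i s - ztil 0 i s) ^ 2) := by
    calc ∑ i, (⨆ τ : Set.Icc (0:ℝ) t, ⨆ s : S, |zhat τ i s - ztil τ i s|) ^ 2
        ≤ (m:ℝ) * 4^(m+1) * en (u 0)^2 := hineq2
      _ ≤ (m:ℝ) * 4^(m+1) * (card^2 * ∑ i, (⨆ s : S, (zhat 0 i s - ztil 0 i s) ^ 2)) := by
          apply mul_le_mul_of_nonneg_left hinit (by positivity)
      _ = (card ^ 2 * ((m:ℝ) * 4 ^ (m+1))) * ∑ i, (⨆ s : S, (zhat 0 i s - ztil 0 i s) ^ 2) := by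
          ring
  have hN0 : (0:ℝ) ≤ 1 / (N:ℝ) := by positivity
  have hmul := mul_le_mul_of_nonneg_left hfinal hN0
  have hRN : (0:ℝ) ≤ (1/(N:ℝ)) * ∑ i, (⨆ s : S, (zhat 0 i s - ztil 0 i s) ^ 2) :=
    mul_nonneg hN0 hR0
  calc (1/(N:ℝ)) * ∑ i, (⨆ τ : Set.Icc (0:ℝ) t, ⨆ s : S, |zhat τ i s - ztil τ i s|) ^ 2
      ≤ (1/(N:ℝ)) * ((card ^ 2 * ((m:ℝ) * 4 ^ (m+1))) *
          ∑ i, (⨆ s : S, (zhat 0 i s - ztil 0 i s) ^ 2)) := hmul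
    _ = (card ^ 2 * ((m:ℝ) * 4 ^ (m+1))) *
          ((1/(N:ℝ)) * ∑ i, (⨆ s : S, (zhat 0 i s - ztil 0 i s) ^ 2)) := by ring
    _ ≤ (card ^ 2 * ((m:ℝ) * 4 ^ (m+1)) + 1) *
          ((1/(N:ℝ)) * ∑ i, (⨆ s : S, (zhat 0 i s - ztil 0 i s) ^ 2)) := by
        nlinarith [hRN]
end

section
/- Let ẑ : [0,∞) → ([0,1]^S)^N be a solution of the NIMFA system with the stochastic block model matrix B̂. Then the block averages x_{k,s}(t) := (1/N_k)·Σ_{i ∈ I_k} ẑ_{i,s}(t) solve the BHMFA system (d/dt) x_{k,s}(t) = Σ_{s'∈S} q_{s'→s} x_{k,s'}(t) + Σ_{s',s̃∈S} q_{s̃;s'→s} x_{k,s'}(t)·Σ_{l=1}^{K} w_kl π_l x_{l,s̃}(t), with initial conditions x_{k,s}(0) = (1/N_k)·Σ_{i ∈ I_k} ẑ_{i,s}(0). (In particular, for any vector u ∈ ℝ^N and any i ∈ I_k, (B̂ u)_i = Σ_{l=1}^{K} w_kl π_l ū_l, where ū_l = (1/N_l)Σ_{j∈I_l} u_j, so (B̂u)_i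 depends only on the block k containing i.) -/
open Finset

/-- Size of the `k`-th block of the partition given by `ι`. -/
def blockSize {K N : ℕ} (ι : Fin N → Fin K) (k : Fin K) : ℕ :=
  (Finset.univ.filter fun i => ι i = k).card

/-- Fraction `π_k = N_k / N` of vertices in the `k`-th block. -/
noncomputable def blockFrac {K N : ℕ} (ι : Fin N → Fin K) (k : Fin K) : ℝ :=
  (blockSize ι k : ℝ) / N

/-- The annealed matrix `B̂` whose entries are `B̂_ij = w_{kl}/N`
for `i ∈ I_k`, `j ∈ I_l` (including the diagonal). -/
noncomputable def Bhat {K N : ℕ} (ι : Fin N → Fin K)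
    (w : Fin K → Fin K → ℝ) : Matrix (Fin N) (Fin N) ℝ :=
  fun i j => w (ι i) (ι j) / N

/-- Right-hand side of the BHMFA (block homogeneous mean-field) ODE system:
`(d/dt) x_{k,s} = Σ_{s'} q_{s'→s} x_{k,s'} + Σ_{s',s̃} q_{s̃;s'→s} x_{k,s'}·Σ_l w_{kl} π_l x_{l,s̃}`. -/
def bhmfaRHS {S : Type*} [Fintype S] {K : ℕ} (qs : S → S → ℝ) (qi : S → S → S → ℝ)
    (w : Fin K → Fin K → ℝ) (π : Fin K → ℝ) (x : Fin K → S → ℝ) (k : Fin K) (s : S) : ℝ :=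
  (∑ s', qs s' s * x k s') +
    ∑ s', ∑ st, qi st s' s * x k s' * (∑ l, w k l * π l * x l st)


private lemma stmt4_aux {S : Type*} [Fintype S] {N : ℕ} (qs : S → S → ℝ)
    (qi : S → S → S → ℝ) (s : S) (T : Finset (Fin N)) (c : ℝ) (C : S → ℝ)
    (z : Fin N → S → ℝ) :
    (∑ s', qs s' s * (c * ∑ i ∈ T, z i s')) +
      (∑ s', ∑ st, qi st s' s * (c * ∑ i ∈ T, z i s') * C st)
    = c * ∑ i ∈ T, ((∑ s', qs s' s * z i s') +
        ∑ s', ∑ st, qi st s' s * z i s' * C st) := by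
  rw [Finset.sum_add_distrib, mul_add]
  congr 1
  · calc ∑ s', qs s' s * (c * ∑ i ∈ T, z i s')
        = ∑ s', ∑ i ∈ T, c * (qs s' s * z i s') := by
          refine Finset.sum_congr rfl fun s' _ => ?_
          have h : qs s' s * (c * ∑ i ∈ T, z i s')
              = (∑ i ∈ T, z i s') * (c * qs s' s) := by ring
          rw [h, Finset.sum_mul]
          exact Finset.sum_congr rfl fun i _ => by ring
      _ = ∑ i ∈ T, ∑ s', c * (qs s' s * z i s') := Finset.sum_comm
      _ = c * ∑ i ∈ T, ∑ s', qs s' s * z i s' := by simp only [Finset.mul_sum]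
  · calc ∑ s', ∑ st, qi st s' s * (c * ∑ i ∈ T, z i s') * C st
        = ∑ s', ∑ st, ∑ i ∈ T, c * (qi st s' s * z i s' * C st) := by
          refine Finset.sum_congr rfl fun s' _ => Finset.sum_congr rfl fun st _ => ?_
          have h : qi st s' s * (c * ∑ i ∈ T, z i s') * C st
              = (∑ i ∈ T, z i s') * (c * (qi st s' s * C st)) := by ring
          rw [h, Finset.sum_mul]
          exact Finset.sum_congr rfl fun i _ => by ring
      _ = ∑ s', ∑ i ∈ T, ∑ st, c * (qi st s' s * z i s' * C st) :=
          Finset.sum_congr rfl fun s' _ => Finset.sum_comm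
      _ = ∑ i ∈ T, ∑ s', ∑ st, c * (qi st s' s * z i s' * C st) := Finset.sum_comm
      _ = c * ∑ i ∈ T, ∑ s', ∑ st, qi st s' s * z i s' * C st := by
          simp only [Finset.mul_sum]

/-- If `ẑ` solves the NIMFA system with the stochastic block model matrix `B̂`,
then the block averages `x_{k,s}(t) = (1/N_k)·Σ_{i∈I_k} ẑ_{i,s}(t)` solve the BHMFA system
(with initial conditions the block averages of `ẑ(0)`, which holds by definition).  In
particular, for any `u ∈ ℝ^N` and `i ∈ I_k`, `(B̂u)_i = Σ_l w_{kl} π_l ū_l` depends only on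
the block `k` containing `i`. -/
theorem stmt_4 (S : Type) [Fintype S] [DecidableEq S] [Nonempty S]
    (qs : S → S → ℝ) (qi : S → S → S → ℝ)
    (hqs : ∀ s' s, s' ≠ s → 0 ≤ qs s' s)
    (hqsd : ∀ s, qs s s = -∑ s' ∈ Finset.univ \ {s}, qs s s')
    (hqi : ∀ st s' s, s' ≠ s → 0 ≤ qi st s' s)
    (hqid : ∀ st s, qi st s s = -∑ s' ∈ Finset.univ \ {s}, qi st s s')
    (K N : ℕ) (ι : Fin N → Fin K) (w : Fin K → Fin K → ℝ)
    (hw : ∀ k l, w k l = w l k) (hwnn : ∀ k l, 0 ≤ w k l)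
    (hblocks : ∀ k, 0 < blockSize ι k)
    (zhat : ℝ → Fin N → S → ℝ)
    -- `ẑ` solves NIMFA with matrix `B̂` on `[0,∞)`
    (hode : ∀ τ : ℝ, 0 ≤ τ → ∀ i s,
      HasDerivAt (fun u => zhat u i s) (nimfaRHS qs qi (Bhat ι w) (zhat τ) i s) τ) :
    -- `(B̂u)_i = Σ_l w_{kl} π_l ū_l` for `i ∈ I_k`
    (∀ (u : Fin N → ℝ) (i : Fin N),
      (Bhat ι w).mulVec u i =
        ∑ l, w (ι i) l * blockFrac ι l *
          ((1 / (blockSize ι l : ℝ)) * ∑ j ∈ Finset.univ.filter fun j => ι j = l, u j)) ∧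
    -- the block averages solve the BHMFA system
    (∀ τ : ℝ, 0 ≤ τ → ∀ (k : Fin K) (s : S),
      HasDerivAt
        (fun u => (1 / (blockSize ι k : ℝ)) *
          ∑ i ∈ Finset.univ.filter fun i => ι i = k, zhat u i s)
        (bhmfaRHS qs qi w (blockFrac ι)
          (fun l s' => (1 / (blockSize ι l : ℝ)) *
            ∑ i ∈ Finset.univ.filter fun i => ι i = l, zhat τ i s') k s)
        τ) := by
  have hB : ∀ (u : Fin N → ℝ) (i : Fin N),
      (Bhat ι w).mulVec u i =
        ∑ l, w (ι i) l * blockFrac ι l *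
          ((1 / (blockSize ι l : ℝ)) * ∑ j ∈ Finset.univ.filter fun j => ι j = l, u j) := by
    intro u i
    have hN : (0:ℝ) < N := by exact_mod_cast i.pos
    have h0 : (Bhat ι w).mulVec u i = ∑ j, w (ι i) (ι j) / N * u j := by
      simp [Matrix.mulVec, dotProduct, Bhat]
    rw [h0, ← Finset.sum_fiberwise Finset.univ ι (fun j => w (ι i) (ι j) / N * u j)]
    refine Finset.sum_congr rfl fun l _ => ?_
    have hl : (0:ℝ) < blockSize ι l := by exact_mod_cast hblocks l
    have h1 : ∑ j ∈ Finset.univ.filter (fun j => ι j = l), w (ι i) (ι j) / N * u j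
        = w (ι i) l / N * ∑ j ∈ Finset.univ.filter (fun j => ι j = l), u j := by
      rw [Finset.mul_sum]
      refine Finset.sum_congr rfl fun j hj => ?_
      rw [(Finset.mem_filter.mp hj).2]
    rw [h1, blockFrac]
    field_simp
  refine ⟨hB, ?_⟩
  intro τ hτ k s
  have hsum : HasDerivAt
      (fun u => (1 / (blockSize ι k : ℝ)) *
        ∑ i ∈ Finset.univ.filter fun i => ι i = k, zhat u i s)
      ((1 / (blockSize ι k : ℝ)) *
        ∑ i ∈ Finset.univ.filter fun i => ι i = k,
          nimfaRHS qs qi (Bhat ι w) (zhat τ) i s) τ :=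
    (HasDerivAt.fun_sum fun i _ => hode τ hτ i s).const_mul _
  convert hsum using 1
  have hc : ∀ i ∈ Finset.univ.filter (fun i => ι i = k), ∀ st : S,
      (∑ j, Bhat ι w i j * zhat τ j st) =
        ∑ l, w k l * blockFrac ι l * ((1 / (blockSize ι l : ℝ)) *
          ∑ j ∈ Finset.univ.filter fun j => ι j = l, zhat τ j st) := by
    intro i hi st
    have h := hB (fun j => zhat τ j st) i
    simp only [Matrix.mulVec, dotProduct] at h
    rw [h, (Finset.mem_filter.mp hi).2]
  have h2 : ∑ i ∈ Finset.univ.filter (fun i => ι i = k),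
      nimfaRHS qs qi (Bhat ι w) (zhat τ) i s
      = ∑ i ∈ Finset.univ.filter (fun i => ι i = k),
        ((∑ s', qs s' s * zhat τ i s') +
          ∑ s', ∑ st, qi st s' s * zhat τ i s' *
            (∑ l, w k l * blockFrac ι l * ((1 / (blockSize ι l : ℝ)) *
              ∑ j ∈ Finset.univ.filter fun j => ι j = l, zhat τ j st))) := by
    refine Finset.sum_congr rfl fun i hi => ?_
    unfold nimfaRHS
    congr 1
    refine Finset.sum_congr rfl fun s' _ => Finset.sum_congr rfl fun st _ => ?_
    rw [hc i hi st]
  rw [h2]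
  unfold bhmfaRHS
  exact stmt4_aux qs qi s (Finset.univ.filter fun i => ι i = k)
    (1 / (blockSize ι k : ℝ))
    (fun st => ∑ l, w k l * blockFrac ι l * ((1 / (blockSize ι l : ℝ)) *
      ∑ j ∈ Finset.univ.filter fun j => ι j = l, zhat τ j st))
    (zhat τ)
end

section
/- Let N ≥ 1, let B be an N×N matrix with nonnegative entries, let Ĵ be the N×N matrix with all entries equal to 1/N, and let u, v ∈ [0,1]^N. Define φ_i = (Bv)_i, ū = (1/N)Σ_i u_i, v̄ = (1/N)Σ_i v_i, z̄_a(1) = (1/N)·Σ_{i=1}^{N} u_i·e^{−φ_i}, and x_a(1) = ū·e^{−v̄}. Then |z̄_a(1) − x_a(1)| ≥ e^{−v̄}·( (1/N)·uᵀ(B − Ĵ)v ) − (1/2)·‖B − Ĵ‖₂². -/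
open Finset Matrix

private lemma remainder_nonneg (a b : ℝ) :
    0 ≤ Real.exp (-a) - Real.exp (-b) + Real.exp (-b) * (a - b) := by
  have h1 : (b - a) + 1 ≤ Real.exp (b - a) := Real.add_one_le_exp _
  have h2 : Real.exp (-b) * Real.exp (b - a) = Real.exp (-a) := by
    rw [← Real.exp_add]; ring_nf
  nlinarith [Real.exp_pos (-b)]

private lemma exp_taylor_key {a b : ℝ} (ha : 0 ≤ a) (hb : 0 ≤ b) :
    Real.exp (-a) - Real.exp (-b) + Real.exp (-b) * (a - b) ≤ (a - b) ^ 2 / 2 := by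
  set h : ℝ → ℝ := fun x =>
    (x - b) ^ 2 / 2 - Real.exp (-x) + Real.exp (-b) - Real.exp (-b) * (x - b) with hh
  have hderiv : ∀ x : ℝ, HasDerivAt h ((x - b) + Real.exp (-x) - Real.exp (-b)) x := by
    intro x
    have h1 : HasDerivAt (fun x : ℝ => (x - b) ^ 2 / 2) (x - b) x := by
      have := (((hasDerivAt_id x).sub_const b).pow 2).div_const 2
      exact this.congr_deriv (by norm_num)
    have h2 : HasDerivAt (fun x : ℝ => Real.exp (-x)) (-Real.exp (-x)) x := by
      simpa [Function.comp_def] using (Real.hasDerivAt_exp (-x)).comp x ((hasDerivAt_id x).neg)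
    have h3 : HasDerivAt (fun x : ℝ => Real.exp (-b) * (x - b)) (Real.exp (-b)) x := by
      simpa using ((hasDerivAt_id x).sub_const b).const_mul (Real.exp (-b))
    have := ((h1.sub h2).add_const (Real.exp (-b))).sub h3
    exact this.congr_deriv (by ring)
  have hdiff : Differentiable ℝ h := fun x => (hderiv x).differentiableAt
  have hb1 : Real.exp (-b) ≤ 1 := Real.exp_le_one_iff.2 (by linarith)
  have key : h b ≤ h a := by
    rcases le_total b a with hba | hab
    · have mono : MonotoneOn h (Set.Ici b) := by
        apply monotoneOn_of_deriv_nonneg (convex_Ici b) hdiff.continuous.continuousOn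
          (fun x _ => (hdiff x).differentiableWithinAt)
        intro x hx
        rw [(hderiv x).deriv]
        have hx' : b ≤ x := le_of_lt (by simpa using hx)
        have h1 : (b - x) + 1 ≤ Real.exp (b - x) := Real.add_one_le_exp _
        have h2 : Real.exp (-b) * Real.exp (b - x) = Real.exp (-x) := by
          rw [← Real.exp_add]; ring_nf
        nlinarith [Real.exp_pos (-b)]
      exact mono (Set.self_mem_Ici) hba hba
    · have anti : AntitoneOn h (Set.Icc 0 b) := by
        apply antitoneOn_of_deriv_nonpos (convex_Icc 0 b) hdiff.continuous.continuousOn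
          (fun x _ => (hdiff x).differentiableWithinAt)
        intro x hx
        rw [(hderiv x).deriv]
        have hx0 : (0:ℝ) ≤ x := (interior_subset hx).1
        have hxb : x ≤ b := (interior_subset hx).2
        have h1 : (x - b) + 1 ≤ Real.exp (x - b) := Real.add_one_le_exp _
        have h2 : Real.exp (-x) * Real.exp (x - b) = Real.exp (-b) := by
          rw [← Real.exp_add]; ring_nf
        have h3 : Real.exp (-x) ≤ 1 := Real.exp_le_one_iff.2 (by linarith)
        nlinarith [Real.exp_pos (-x)]
      exact anti ⟨ha, hab⟩ ⟨le_trans ha hab, le_refl b⟩ hab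
  have hhb : h b = 0 := by simp [hh]
  have := key
  rw [hhb] at this
  simp only [hh] at this
  linarith

/-- The key deterministic inequality for the catalyst process: with
`φ_i = (Bv)_i`, `ū = (1/N)Σ u_i`, `v̄ = (1/N)Σ v_i`, `z̄_a(1) = (1/N)Σ_i u_i e^{−φ_i}` and
`x_a(1) = ū·e^{−v̄}`, one has
`|z̄_a(1) − x_a(1)| ≥ e^{−v̄}·((1/N)·uᵀ(B − Ĵ)v) − (1/2)·‖B − Ĵ‖₂²`,
where `Ĵ` is the matrix with all entries `1/N`. -/
theorem stmt_8 (N : ℕ) (hN : 1 ≤ N) (B : Matrix (Fin N) (Fin N) ℝ)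
    (hB : ∀ i j, 0 ≤ B i j) (u v : Fin N → ℝ)
    (hu : ∀ i, u i ∈ Set.Icc (0:ℝ) 1) (hv : ∀ i, v i ∈ Set.Icc (0:ℝ) 1) :
    Real.exp (-((1 / N) * ∑ i, v i)) *
        ((1 / N) * (u ⬝ᵥ (B - Matrix.of fun _ _ => (1 / N : ℝ)).mulVec v)) -
      (1 / 2) * opNorm2 (B - Matrix.of fun _ _ => (1 / N : ℝ)) ^ 2 ≤
    |(1 / N) * (∑ i, u i * Real.exp (-(B.mulVec v i))) -
      ((1 / N) * ∑ i, u i) * Real.exp (-((1 / N) * ∑ i, v i))| := by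
  have hN0 : (0:ℝ) < N := by exact_mod_cast Nat.lt_of_lt_of_le Nat.zero_lt_one hN
  set J : Matrix (Fin N) (Fin N) ℝ := Matrix.of fun _ _ => (1 / N : ℝ) with hJ
  set D : Matrix (Fin N) (Fin N) ℝ := B - J with hDdef
  set vb : ℝ := (1 / N) * ∑ i, v i with hvb
  set d : Fin N → ℝ := D.mulVec v with hd
  have hvb0 : 0 ≤ vb := by
    rw [hvb]
    have : 0 ≤ ∑ i, v i := Finset.sum_nonneg fun i _ => (hv i).1
    positivity
  have hE1 : Real.exp (-vb) ≤ 1 := Real.exp_le_one_iff.2 (by linarith)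
  have hphi : ∀ i, B.mulVec v i = d i + vb := by
    intro i
    have hJv : J.mulVec v i = vb := by
      simp only [hJ, Matrix.mulVec, dotProduct, Matrix.of_apply, hvb, Finset.mul_sum]
    have hsub : d i = B.mulVec v i - J.mulVec v i := by
      rw [hd, hDdef, Matrix.sub_mulVec]; rfl
    rw [hsub, hJv]; ring
  have hphi0 : ∀ i, 0 ≤ B.mulVec v i := by
    intro i
    simp only [Matrix.mulVec, dotProduct]
    exact Finset.sum_nonneg fun j _ => mul_nonneg (hB i j) (hv j).1
  -- norm bound : ∑ d i ^ 2 ≤ opNorm2 D ^ 2 * N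
  have hnorm : ∑ i, d i ^ 2 ≤ opNorm2 D ^ 2 * N := by
    set T := LinearMap.toContinuousLinearMap (Matrix.toEuclideanLin D) with hT
    set x : EuclideanSpace ℝ (Fin N) := (WithLp.equiv 2 (Fin N → ℝ)).symm v with hx
    have hTx : T x = (WithLp.equiv 2 (Fin N → ℝ)).symm d := by
      rw [hT, hx, LinearMap.coe_toContinuousLinearMap']
      exact Matrix.toEuclideanLin_apply_piLp_toLp D v
    have hxi : ∀ i, x i = v i := fun i => rfl
    have hxnorm : ‖x‖ ^ 2 ≤ (N : ℝ) := by
      rw [EuclideanSpace.norm_eq, Real.sq_sqrt (by positivity)]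
      calc ∑ i, ‖x i‖ ^ 2 ≤ ∑ _i : Fin N, (1:ℝ) := by
            apply Finset.sum_le_sum
            intro i _
            rw [hxi i, Real.norm_eq_abs, sq_abs]
            nlinarith [(hv i).1, (hv i).2]
        _ = (N : ℝ) := by simp
    have h1 : ∑ i, d i ^ 2 = ‖T x‖ ^ 2 := by
      rw [hTx, EuclideanSpace.norm_eq, Real.sq_sqrt (by positivity)]
      congr 1
      ext i
      rw [Real.norm_eq_abs, sq_abs]
      rfl
    have h2 : ‖T x‖ ≤ opNorm2 D * ‖x‖ := T.le_opNorm x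
    have h3 : (0:ℝ) ≤ opNorm2 D := norm_nonneg _
    calc ∑ i, d i ^ 2 = ‖T x‖ ^ 2 := h1
      _ ≤ (opNorm2 D * ‖x‖) ^ 2 := by
          apply sq_le_sq' _ h2
          nlinarith [norm_nonneg (T x), norm_nonneg x]
      _ = opNorm2 D ^ 2 * ‖x‖ ^ 2 := by ring
      _ ≤ opNorm2 D ^ 2 * N := by nlinarith
  -- pointwise estimate
  have hpt : ∀ i, u i * (Real.exp (-vb) * d i) - d i ^ 2 / 2 ≤
      u i * Real.exp (-vb) - u i * Real.exp (-(B.mulVec v i)) := by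
    intro i
    have ha : 0 ≤ B.mulVec v i := hphi0 i
    have hkey := exp_taylor_key ha hvb0
    have hnn := remainder_nonneg (B.mulVec v i) vb
    have hab : B.mulVec v i - vb = d i := by rw [hphi i]; ring
    rw [hab] at hkey hnn
    nlinarith [(hu i).1, (hu i).2]
  -- sum up
  have hsum : Real.exp (-vb) * ((1 / N) * (u ⬝ᵥ d)) - (1/2) * opNorm2 D ^ 2 ≤
      ((1 / N) * ∑ i, u i) * Real.exp (-vb) -
        (1 / N) * (∑ i, u i * Real.exp (-(B.mulVec v i))) := by
    have hsum1 : ∑ i, (u i * (Real.exp (-vb) * d i) - d i ^ 2 / 2) ≤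
        ∑ i, (u i * Real.exp (-vb) - u i * Real.exp (-(B.mulVec v i))) :=
      Finset.sum_le_sum fun i _ => hpt i
    rw [Finset.sum_sub_distrib, Finset.sum_sub_distrib] at hsum1
    have e1 : ∑ i, u i * (Real.exp (-vb) * d i) = Real.exp (-vb) * (u ⬝ᵥ d) := by
      rw [dotProduct, Finset.mul_sum]
      congr 1; ext i; ring
    have e2 : ∑ i, d i ^ 2 / 2 = (∑ i, d i ^ 2) / 2 := by
      rw [Finset.sum_div]
    have e3 : ∑ i, u i * Real.exp (-vb) = (∑ i, u i) * Real.exp (-vb) := by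
      rw [Finset.sum_mul]
    rw [e1, e2, e3] at hsum1
    have hmul := mul_le_mul_of_nonneg_left hsum1 (show (0:ℝ) ≤ 1/N by positivity)
    have h4 : (1/N) * ((∑ i, d i ^ 2) / 2) ≤ (1/2) * opNorm2 D ^ 2 := by
      have h5 : (1/N) * ((∑ i, d i ^ 2) / 2) ≤ (1/N) * ((opNorm2 D ^ 2 * N) / 2) := by
        have hS : ∑ i, d i ^ 2 ≤ opNorm2 D ^ 2 * N := hnorm
        have : (0:ℝ) ≤ 1/N := by positivity
        nlinarith
      have h6 : (1/N) * ((opNorm2 D ^ 2 * N) / 2) = (1/2) * opNorm2 D ^ 2 := by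
        field_simp
      linarith
    nlinarith [hmul, h4]
  have habs : ((1 / N) * ∑ i, u i) * Real.exp (-vb) -
      (1 / N) * (∑ i, u i * Real.exp (-(B.mulVec v i))) ≤
      |(1 / N) * (∑ i, u i * Real.exp (-(B.mulVec v i))) -
        ((1 / N) * ∑ i, u i) * Real.exp (-vb)| := by
    rw [abs_sub_comm]
    exact le_abs_self _
  linarith [hsum, habs]
end

section
/- Consider the degree process on the Erdős–Rényi graph at time 1 with all vertices initially in state a: the graph has N vertices with i.i.d. Bernoulli(ρ) edge indicators a_ij (1 ≤ i < j ≤ N), degrees δ_i = Σ_j a_ij and d = (N−1)ρ; conditionally on the graph, let ξ_1,…,ξ_N be independent Bernoulli variables with P(ξ_i = 1 | G) = e^{−δ_i/d}, and set ξ̄_a(1) = (1/N)·Σ_{i=1}^{N} ξ_i and x_a(1) = e^{−1}. Then there exist absolute constants c, C > 0 and thresholds d₀, N₀ such that for all N ≥ N₀ and all ρ with d₀ ≤ d ≤ N−1: c·max{1/d², 1/N} ≤ E[ (ξ̄_a(1) − e^{−1})² ] ≤ C·max{1/d², 1/N}; equivalently, ‖ξ̄_a(1) − x_a(1)‖ =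 Θ( max{1/d, 1/√N} ), where ‖X‖ = (E[X²])^{1/2}. -/
open MeasureTheory ProbabilityTheory

/-- `A` is the adjacency matrix of an Erdős–Rényi graph with edge probability `p`:
symmetric `{0,1}` entries, empty diagonal, each off-diagonal entry Bernoulli(`p`),
independent over the pairs `i < j`. -/
def IsERGraph {Ω : Type} [MeasurableSpace Ω] (μ : Measure Ω) {N : ℕ}
    (A : Ω → Matrix (Fin N) (Fin N) ℝ) (p : ℝ) : Prop :=
  (∀ ω i j, A ω i j = A ω j i) ∧
  (∀ ω i, A ω i i = 0) ∧
  (∀ ω i j, A ω i j = 0 ∨ A ω i j = 1) ∧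
  (∀ i j, Measurable fun ω => A ω i j) ∧
  (∀ i j, i ≠ j → μ {ω | A ω i j = 1} = ENNReal.ofReal p) ∧
  iIndepFun
    (fun (e : {q : Fin N × Fin N // q.1 < q.2}) ω => A ω e.val.1 e.val.2) μ

/-- The σ-algebra generated by the random graph `A`. -/
def graphSigma {Ω : Type} {N : ℕ} (A : Ω → Matrix (Fin N) (Fin N) ℝ) :
    MeasurableSpace Ω :=
  MeasurableSpace.comap (fun ω => fun i j => A ω i j) inferInstance

private lemma exp_upper_small {s : ℝ} (h0 : 0 ≤ s) (h1 : s ≤ 1/2) :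
    Real.exp s ≤ 1 + 2*s := by
  have h := Real.exp_bound_div_one_sub_of_interval h0 (by linarith)
  have h2 : 1/(1-s) ≤ 1 + 2*s := by
    rw [div_le_iff₀ (by linarith)]
    nlinarith
  linarith

set_option maxHeartbeats 1000000 in
private lemma aux_analytic (N : ℕ) (ρ d q1 q2 m1 m2 E : ℝ)
    (hN : 10000 ≤ N) (hρ0 : 0 < ρ) (hρ1 : ρ ≤ 1)
    (hdd : d = ((N:ℝ)-1)*ρ) (hd : 16 ≤ d)
    (hq1 : q1 = 1 - ρ + ρ * Real.exp (-(1/d)))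
    (hq2 : q2 = 1 - ρ + ρ * Real.exp (-(1/d))^2)
    (hm1 : m1 = q1^(N-1)) (hm2 : m2 = q2 * q1^(2*N-4))
    (hE : E = (1/(N:ℝ)^2) * ((N:ℝ) * m1 + ((N:ℝ)^2 - (N:ℝ)) * m2)
      - 2*Real.exp (-1) * m1 + Real.exp (-1)^2) :
    0.01 * max (1/d^2) (1/(N:ℝ)) ≤ E ∧ E ≤ 6 * max (1/d^2) (1/(N:ℝ)) := by
  have hNR : (10000:ℝ) ≤ (N:ℝ) := by exact_mod_cast hN
  have hN0 : (0:ℝ) < N := by linarith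
  have hd0 : (0:ℝ) < d := by linarith
  set t : ℝ := 1/d with hT
  clear_value t
  have ht0 : 0 < t := by rw [hT]; positivity
  have ht16 : t ≤ 1/16 := by
    rw [hT, div_le_div_iff₀ hd0 (by norm_num)]; linarith
  have ht2 : t^2 = 1/d^2 := by rw [hT]; field_simp
  have hdt : d * t = 1 := by rw [hT]; field_simp
  set u : ℝ := Real.exp (-t) with hU
  clear_value u
  have hu0 : 0 < u := by rw [hU]; exact Real.exp_pos _
  have hu1 : u ≤ 1 := by
    rw [hU]; exact Real.exp_le_one_iff.2 (by linarith)
  -- exp bound with n = 3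
  have hub := Real.exp_bound (x := -t) (by rw [abs_neg, abs_of_pos ht0]; linarith) (n := 3) (by norm_num)
  have hsum : ∑ m ∈ Finset.range 3, (-t) ^ m / (m.factorial : ℝ) = 1 - t + t^2/2 := by
    simp [Finset.sum_range_succ, Nat.factorial]
    ring
  rw [hsum, abs_neg, abs_of_pos ht0] at hub
  have hbound : (t:ℝ)^3 * (((3:ℕ).succ : ℝ) / (((3:ℕ).factorial : ℝ) * (3:ℕ))) = 2/9 * t^3 := by
    norm_num [Nat.factorial]; ring
  rw [hbound, ← hU] at hub
  have hub' := abs_le.1 hub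
  clear hub hsum hbound
  have hcube : 2/9*t^3 ≤ 0.1*t^2 := by
    linarith [mul_nonneg (sq_nonneg t) (show (0:ℝ) ≤ 0.1 - (2/9)*t by linarith)]
  have hcube0 : 0 ≤ 2/9*t^3 := by positivity
  have h1u_hi : 1 - u ≤ t - 0.4*t^2 := by linarith [hub'.1]
  have h1u_lo : t - 0.6*t^2 ≤ 1 - u := by linarith [hub'.2]
  set n : ℝ := (N:ℝ) - 1 with hn
  clear_value n
  have hn0 : (9999:ℝ) ≤ n := by rw [hn]; linarith
  have hnρ : n * ρ = d := by rw [hdd, hn]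
  set x : ℝ := ρ * (1-u) with hX
  clear_value x
  have hx0 : 0 ≤ x := by
    rw [hX]; apply mul_nonneg hρ0.le; linarith
  have h1ut : 1 - u ≤ t := by linarith [h1u_hi, sq_nonneg t]
  have hxt : x ≤ ρ * t := by
    rw [hX]; exact mul_le_mul_of_nonneg_left h1ut hρ0.le
  have hxt' : x ≤ t := by
    have : ρ * t ≤ 1 * t := mul_le_mul_of_nonneg_right hρ1 ht0.le
    linarith
  have hx116 : x ≤ 1/16 := le_trans hxt' ht16
  have hnxd : n*x = d*(1-u) := by rw [hX, ← hnρ]; ring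
  have hnx_hi : n*x ≤ 1 - 0.4*t := by
    rw [hnxd]
    have h1 : d*(1-u) ≤ d*(t - 0.4*t^2) := mul_le_mul_of_nonneg_left h1u_hi hd0.le
    have h2 : d*(t-0.4*t^2) = 1 - 0.4*t := by linear_combination (1 - 0.4*t) * hdt
    linarith
  have hnx_lo : 1 - 0.6*t ≤ n*x := by
    rw [hnxd]
    have h1 : d*(t-0.6*t^2) ≤ d*(1-u) := mul_le_mul_of_nonneg_left h1u_lo hd0.le
    have h2 : d*(t-0.6*t^2) = 1 - 0.6*t := by linear_combination (1 - 0.6*t) * hdt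
    linarith
  have hnx1 : n*x ≤ 1 := by linarith
  have hq1x : q1 = 1 - x := by rw [hq1, hX]; ring
  have hq1_pos : 0 < q1 := by rw [hq1x]; linarith
  have hq1_le1 : q1 ≤ 1 := by rw [hq1x]; linarith
  have hlog_hi : Real.log q1 ≤ -x := by
    have := Real.log_le_sub_one_of_pos hq1_pos
    rw [hq1x] at this ⊢; linarith
  have hlog_lo : -x*(1+2*x) ≤ Real.log q1 := by
    have h := Real.log_le_sub_one_of_pos (x := q1⁻¹) (by positivity)
    rw [Real.log_inv] at h
    have hx1ne : (1:ℝ) - x ≠ 0 := by rw [← hq1x]; exact hq1_pos.ne'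
    have h2 : q1⁻¹ - 1 = x / (1-x) := by
      rw [hq1x]; field_simp; ring
    rw [h2] at h
    have h3 : x/(1-x) ≤ x*(1+2*x) := by
      rw [div_le_iff₀ (by linarith)]
      linarith [mul_nonneg (sq_nonneg x) (show (0:ℝ) ≤ 1 - 2*x by linarith)]
    linarith
  have hcast : ((N-1:ℕ):ℝ) = n := by
    rw [Nat.cast_sub (by omega), hn]; push_cast; ring
  have hm1exp : m1 = Real.exp (n * Real.log q1) := by
    rw [hm1, ← hcast, Real.exp_nat_mul, Real.exp_log hq1_pos]
  have hnn : (0:ℝ) ≤ n := by linarith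
  have hm1_hi : m1 ≤ Real.exp (-1 + 0.6*t) := by
    rw [hm1exp]
    apply Real.exp_le_exp.2
    have h1 : n * Real.log q1 ≤ n * (-x) := mul_le_mul_of_nonneg_left hlog_hi hnn
    have h2 : n * (-x) = -(n*x) := by ring
    linarith [hnx_lo]
  have hm1_lo : Real.exp (-1 - 2*t) ≤ m1 := by
    rw [hm1exp]
    apply Real.exp_le_exp.2
    have h1 : n * (-x*(1+2*x)) ≤ n * Real.log q1 := mul_le_mul_of_nonneg_left hlog_lo hnn
    have h2 : (n*x)*x ≤ 1*t := mul_le_mul hnx1 hxt' hx0 (by norm_num)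
    -- n*(-x*(1+2x)) = -(n*x) - 2*(n*x*x) ≥ -1 - 2t
    linarith [hnx1, h1, h2]
  set a : ℝ := Real.exp (-1) with hA
  clear_value a
  have ha0 : 0 < a := by rw [hA]; exact Real.exp_pos _
  have ha1 : a ≤ 1 := by rw [hA]; exact Real.exp_le_one_iff.2 (by norm_num)
  have ha_lo : 0.36 ≤ a := by
    have h1 := Real.exp_one_lt_d9
    have h2 : a = (Real.exp 1)⁻¹ := by rw [hA, ← Real.exp_neg]
    rw [h2, le_inv_comm₀ (by norm_num) (Real.exp_pos 1)]
    linarith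
  -- bias bounds
  have hexp06 : Real.exp (-1 + 0.6*t) = a * Real.exp (0.6*t) := by
    rw [hA, ← Real.exp_add]
  have hexp2 : Real.exp (-1 - 2*t) = a * Real.exp (-(2*t)) := by
    rw [hA, ← Real.exp_add]; ring_nf
  have hbias_hi : m1 - a ≤ 1.2*t := by
    have h1 : Real.exp (0.6*t) ≤ 1 + 1.2*t := by
      have := exp_upper_small (s := 0.6*t) (by linarith) (by linarith)
      linarith
    have h2 : a * Real.exp (0.6*t) ≤ a * (1+1.2*t) := mul_le_mul_of_nonneg_left h1 ha0.le
    have h3 : a * (1.2*t) ≤ 1 * (1.2*t) := mul_le_mul_of_nonneg_right ha1 (by linarith)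
    have h4 : m1 ≤ a * (1+1.2*t) := by rw [hexp06] at hm1_hi; linarith
    linarith [h4, h3]
  have hbias_lo : -(2*t) ≤ m1 - a := by
    have h1 : (1:ℝ) - 2*t ≤ Real.exp (-(2*t)) := by
      have := Real.add_one_le_exp (-(2*t)); linarith
    have h2 : a * (1 - 2*t) ≤ a * Real.exp (-(2*t)) := mul_le_mul_of_nonneg_left h1 ha0.le
    have h3 : a * (2*t) ≤ 1 * (2*t) := mul_le_mul_of_nonneg_right ha1 (by linarith)
    have h4 : a * (1 - 2*t) ≤ m1 := by rw [hexp2] at hm1_lo; linarith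
    linarith [h4, h3]
  have hbias_sq_hi : (m1-a)^2 ≤ 4*t^2 := by
    have h1 := sq_le_sq' hbias_lo (show m1 - a ≤ 2*t by linarith)
    linarith [h1]
  -- var2
  have h1ρ : 0 ≤ 1 - ρ := by linarith
  have hq1pow_le1 : ∀ k : ℕ, q1^k ≤ 1 := fun k => pow_le_one₀ hq1_pos.le hq1_le1
  have hq1pow_nonneg : ∀ k : ℕ, 0 ≤ q1^k := fun k => pow_nonneg hq1_pos.le k
  have hm1sq : m1^2 = q1^(2*N-4) * q1^2 := by
    rw [hm1, ← pow_mul, ← pow_add]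
    congr 1
    omega
  have hq2q1 : q2 - q1^2 = ρ*(1-ρ)*(1-u)^2 := by rw [hq1, hq2, hU]; ring
  have hvar2_eq : m2 - m1^2 = q1^(2*N-4) * (ρ*(1-ρ)*(1-u)^2) := by
    rw [hm2, hm1sq, ← hq2q1]; ring
  have hprd_nonneg : 0 ≤ ρ*(1-ρ)*(1-u)^2 :=
    mul_nonneg (mul_nonneg hρ0.le h1ρ) (sq_nonneg _)
  have hvar2_nonneg : 0 ≤ m2 - m1^2 := by
    rw [hvar2_eq]; exact mul_nonneg (hq1pow_nonneg _) hprd_nonneg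
  have hvar2_hi : m2 - m1^2 ≤ t^2 := by
    rw [hvar2_eq]
    have h1u2 : (1-u)^2 ≤ t^2 := sq_le_sq' (by linarith) h1ut
    have hρρ : ρ*(1-ρ) ≤ 1 := mul_le_one₀ hρ1 h1ρ (by linarith)
    have h1 : ρ*(1-ρ)*(1-u)^2 ≤ 1*(1-u)^2 := mul_le_mul_of_nonneg_right hρρ (sq_nonneg _)
    have h2 : q1^(2*N-4) * (ρ*(1-ρ)*(1-u)^2) ≤ 1 * (ρ*(1-ρ)*(1-u)^2) :=
      mul_le_mul_of_nonneg_right (hq1pow_le1 _) hprd_nonneg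
    linarith
  -- var1
  have hq2_nonneg : 0 ≤ q2 := by
    rw [hq2]
    have h1 : 0 ≤ ρ * u^2 := mul_nonneg hρ0.le (sq_nonneg u)
    linarith
  have hq2_le_q1 : q2 ≤ q1 := by
    have hu2 : u^2 ≤ u := by
      linarith [mul_nonneg hu0.le (show (0:ℝ) ≤ 1-u by linarith)]
    have h2 := mul_le_mul_of_nonneg_left hu2 hρ0.le
    rw [hq1, hq2]
    linarith
  have hm2_nonneg : 0 ≤ m2 := by rw [hm2]; exact mul_nonneg hq2_nonneg (hq1pow_nonneg _)
  have hm2_le : m2 ≤ q1^(N-1) * q1^(N-2) := by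
    rw [hm2]
    have h1 : q2 * q1^(2*N-4) ≤ q1 * q1^(2*N-4) :=
      mul_le_mul_of_nonneg_right hq2_le_q1 (hq1pow_nonneg _)
    have h2 : q1 * q1^(2*N-4) = q1^(N-1) * q1^(N-2) := by
      rw [← pow_succ', ← pow_add]
      congr 1
      omega
    linarith
  have hm1_le1 : m1 ≤ 1 := by rw [hm1]; exact hq1pow_le1 _
  have hvar1_nonneg : 0 ≤ m1 - m2 := by
    have h1 : q1^(N-1)*q1^(N-2) ≤ q1^(N-1) * 1 :=
      mul_le_mul_of_nonneg_left (hq1pow_le1 _) (hq1pow_nonneg _)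
    rw [hm1]; linarith [hm2_le]
  have hvar1_hi : m1 - m2 ≤ 1 := by linarith
  -- decomposition
  have hNne : (N:ℝ) ≠ 0 := by positivity
  have hdec : E = (m1-a)^2 + (m2 - m1^2) + (1/(N:ℝ))*(m1 - m2) := by
    rw [hE]
    field_simp
    ring
  have hNinv_pos : (0:ℝ) < 1/(N:ℝ) := by positivity
  constructor
  · -- lower bound
    rcases le_total (1/d^2) (1/(N:ℝ)) with hAB | hAB
    · -- case A : max = 1/N
      rw [max_eq_right hAB]
      -- m1 ≥ 0.3
      have hexp0125 : Real.exp (0.125) ≤ 8/7 := by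
        have h := Real.exp_bound_div_one_sub_of_interval (x := 0.125) (by norm_num) (by norm_num)
        norm_num at h ⊢
        linarith
      have hexp1125 : Real.exp (1.125) ≤ 3.2 := by
        have h1 : Real.exp (1.125) = Real.exp 1 * Real.exp 0.125 := by
          rw [← Real.exp_add]; norm_num
        have h2 := Real.exp_one_lt_d9
        rw [h1]
        have h3 : Real.exp 1 * Real.exp 0.125 ≤ 2.7182818286 * (8/7) :=
          mul_le_mul h2.le hexp0125 (Real.exp_pos _).le (by norm_num)
        linarith
      have hm1_03 : 0.3 ≤ m1 := by
        have h1 : Real.exp (-(1.125)) ≤ m1 := by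
          refine le_trans (Real.exp_le_exp.2 ?_) hm1_lo
          linarith
        have h2 : (0.3:ℝ) ≤ Real.exp (-(1.125)) := by
          rw [Real.exp_neg, le_inv_comm₀ (by norm_num) (Real.exp_pos _)]
          norm_num
          linarith [hexp1125]
        linarith
      -- q1^(N-2) ≤ 1/2
      have hcastN2 : ((N-2:ℕ):ℝ) = n - 1 := by
        rw [Nat.cast_sub (by omega), hn]; push_cast; ring
      have hpowN2 : q1^(N-2) = Real.exp ((n-1) * Real.log q1) := by
        rw [← hcastN2, Real.exp_nat_mul, Real.exp_log hq1_pos]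
      have hq1N2 : q1^(N-2) ≤ 1/2 := by
        rw [hpowN2]
        have h1 : (n-1) * Real.log q1 ≤ (n-1)*(-x) :=
          mul_le_mul_of_nonneg_left hlog_hi (by linarith)
        have h2 : (n-1)*(-x) = -(n*x) + x := by ring
        have h3 : (n-1) * Real.log q1 ≤ -(0.9:ℝ) := by
          rw [h2] at h1
          linarith [hnx_lo, hx116, ht16]
        have h5 : (2:ℝ) ≤ Real.exp 0.9 := by
          calc (2:ℝ) = Real.exp (Real.log 2) := (Real.exp_log (by norm_num)).symm
          _ ≤ Real.exp 0.9 := Real.exp_le_exp.2 (by linarith [Real.log_two_lt_d9])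
        calc Real.exp ((n-1)*Real.log q1) ≤ Real.exp (-(0.9:ℝ)) := Real.exp_le_exp.2 h3
        _ = (Real.exp 0.9)⁻¹ := Real.exp_neg _
        _ ≤ (2:ℝ)⁻¹ := inv_anti₀ (by norm_num) h5
        _ = 1/2 := by norm_num
      have hm2half : m2 ≤ m1 * (1/2) := by
        have h1 : q1^(N-1) * q1^(N-2) ≤ q1^(N-1) * (1/2) :=
          mul_le_mul_of_nonneg_left hq1N2 (hq1pow_nonneg _)
        rw [hm1]; linarith [hm2_le]
      have h6 : 0.15 ≤ m1 - m2 := by linarith [hm2half, hm1_03]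
      have h7 : (1/(N:ℝ))*0.15 ≤ (1/(N:ℝ))*(m1-m2) := mul_le_mul_of_nonneg_left h6 hNinv_pos.le
      linarith only [h7, sq_nonneg (m1-a), hvar2_nonneg, hdec.le, hdec.ge, hNinv_pos.le]
    · -- case B : max = 1/d^2
      rw [max_eq_left hAB]
      have hd2N : d^2 ≤ (N:ℝ) := by
        rw [div_le_div_iff₀ hN0 (by positivity)] at hAB
        linarith
      have hNn : (N:ℝ) = n + 1 := by rw [hn]; ring
      have hρ002 : ρ ≤ 0.02 := by
        by_contra hcon
        push_neg at hcon
        have hd1 : n*0.02 < d := by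
          rw [← hnρ]; exact mul_lt_mul_of_pos_left hcon (by linarith)
        have hd199 : (199.98:ℝ) < d := by linarith
        have hdd2 : d*(n*0.02) < d*d := mul_lt_mul_of_pos_left hd1 hd0
        have h3 : 199.98*n ≤ d*n := mul_le_mul_of_nonneg_right hd199.le (by linarith)
        linarith [hd2N, hdd2, h3, hn0, hNn.le, hNn.ge]
      have hx002 : x ≤ 0.02*t := by
        calc x ≤ ρ*t := hxt
        _ ≤ 0.02*t := mul_le_mul_of_nonneg_right hρ002 ht0.le
      have hnlq : -(1 - 0.36*t) ≤ n * Real.log q1 := by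
        have h1 : n * (-x*(1+2*x)) ≤ n * Real.log q1 := mul_le_mul_of_nonneg_left hlog_lo hnn
        have h2 : (n*x)*x ≤ 1*(0.02*t) := mul_le_mul hnx1 hx002 hx0 (by norm_num)
        have h3 : n * (-x*(1+2*x)) = -(n*x) - 2*((n*x)*x) := by ring
        linarith [hnx_hi]
      have hm1_loB : a*(1 + 0.36*t) ≤ m1 := by
        rw [hm1exp]
        have h1 : Real.exp (-1 + 0.36*t) ≤ Real.exp (n*Real.log q1) :=
          Real.exp_le_exp.2 (by linarith)
        have hsplit : Real.exp (-1 + 0.36*t) = a * Real.exp (0.36*t) := by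
          rw [hA, ← Real.exp_add]
        have hlin : 1 + 0.36*t ≤ Real.exp (0.36*t) := by
          linarith [Real.add_one_le_exp (0.36*t)]
        have h2 : a*(1+0.36*t) ≤ a*Real.exp (0.36*t) := mul_le_mul_of_nonneg_left hlin ha0.le
        rw [hsplit] at h1
        linarith
      have hbiasB : 0.1*t ≤ m1 - a := by
        have h1 : 0.36*(0.36*t) ≤ a*(0.36*t) :=
          mul_le_mul_of_nonneg_right ha_lo (by linarith)
        linarith [hm1_loB, h1, ht0.le]
      have hbiasB2 : 0.01*t^2 ≤ (m1-a)^2 := by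
        have h1 : (0.1*t)^2 ≤ (m1-a)^2 := pow_le_pow_left₀ (by linarith) hbiasB 2
        linarith [h1]
      have hvar1t : 0 ≤ (1/(N:ℝ))*(m1-m2) := mul_nonneg hNinv_pos.le hvar1_nonneg
      rw [← ht2]
      linarith only [hbiasB2, hvar2_nonneg, hvar1t, hdec.ge, hdec.le]
  · -- upper bound
    have hmax1 : 1/d^2 ≤ max (1/d^2) (1/(N:ℝ)) := le_max_left _ _
    have hmax2 : 1/(N:ℝ) ≤ max (1/d^2) (1/(N:ℝ)) := le_max_right _ _
    have h1 : (1/(N:ℝ))*(m1-m2) ≤ (1/(N:ℝ))*1 := mul_le_mul_of_nonneg_left hvar1_hi hNinv_pos.le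
    have h5 : (5:ℝ)*t^2 = 5*(1/d^2) := by rw [ht2]
    linarith only [hdec.le, hdec.ge, hbias_sq_hi, hvar2_hi, h1, hmax1, hmax2, h5]

private lemma integrable_of_bdd {Ω : Type} [MeasurableSpace Ω] {μ : Measure Ω}
    [IsProbabilityMeasure μ] {f : Ω → ℝ} (hf : Measurable f) {C : ℝ}
    (hb : ∀ ω, |f ω| ≤ C) : Integrable f μ :=
  (integrable_const C).mono' hf.aestronglyMeasurable
    (Filter.Eventually.of_forall (by simpa using hb))

private lemma aux_bernoulli {Ω : Type} [MeasurableSpace Ω] {μ : Measure Ω}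
    [IsProbabilityMeasure μ] {X : Ω → ℝ} (h01 : ∀ ω, X ω = 0 ∨ X ω = 1)
    (hm : Measurable X) {ρ : ℝ} (hρ : 0 ≤ ρ)
    (hX1 : μ {ω | X ω = 1} = ENNReal.ofReal ρ) (φ : ℝ → ℝ) :
    ∫ ω, φ (X ω) ∂μ = (1 - ρ) * φ 0 + ρ * φ 1 := by
  have hS : MeasurableSet {ω | X ω = 1} := hm (measurableSet_singleton 1)
  have hXeq : X = Set.indicator {ω | X ω = 1} (fun _ => (1:ℝ)) := by
    funext ω
    rcases h01 ω with h | h <;> simp [Set.indicator_apply, Set.mem_setOf_eq, h]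
  have hint : Integrable X μ :=
    integrable_of_bdd hm (C := 1) (fun ω => by rcases h01 ω with h|h <;> simp [h])
  have hIX : ∫ ω, X ω ∂μ = ρ := by
    have : ∫ ω, X ω ∂μ = ∫ ω, Set.indicator {ω | X ω = 1} (fun _ => (1:ℝ)) ω ∂μ := by
      rw [← hXeq]
    rw [this]
    rw [show (fun _ : Ω => (1:ℝ)) = (1 : Ω → ℝ) from rfl]
    rw [integral_indicator_one hS, measureReal_def, hX1, ENNReal.toReal_ofReal hρ]
  have hpt : ∀ ω, φ (X ω) = φ 0 + (φ 1 - φ 0) * X ω := by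
    intro ω; rcases h01 ω with h|h <;> rw [h] <;> ring_nf
  calc ∫ ω, φ (X ω) ∂μ = ∫ ω, (φ 0 + (φ 1 - φ 0) * X ω) ∂μ :=
        integral_congr_ae (Filter.Eventually.of_forall hpt)
  _ = φ 0 + (φ 1 - φ 0) * ρ := by
      rw [integral_add (integrable_const _) (hint.const_mul _), integral_const_mul,
        integral_const, hIX]
      simp
  _ = (1-ρ)*φ 0 + ρ*φ 1 := by ring

private lemma aux_prod_integral {Ω ι : Type} [MeasurableSpace Ω] {μ : Measure Ω}
    [IsProbabilityMeasure μ] (f : ι → Ω → ℝ)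
    (hind : iIndepFun f μ)
    (hmeas : ∀ i, Measurable (f i)) (s : Finset ι) :
    ∫ ω, ∏ i ∈ s, f i ω ∂μ = ∏ i ∈ s, ∫ ω, f i ω ∂μ := by
  classical
  induction s using Finset.induction_on with
  | empty => simp
  | @insert a s ha ih =>
    rw [Finset.prod_insert ha]
    have hfs : (fun ω => ∏ i ∈ s, f i ω) = (∏ j ∈ s, f j) := by
      funext ω; rw [Finset.prod_apply]
    have hmprod : Measurable (∏ j ∈ s, f j) := by
      rw [← hfs]; exact Finset.measurable_prod s (fun i _ => hmeas i)
    have hI : IndepFun (f a) (∏ j ∈ s, f j) μ :=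
      (hind.indepFun_finset_prod_of_notMem hmeas ha).symm
    have h2 := hI.integral_mul_eq_mul_integral (hmeas a).aestronglyMeasurable hmprod.aestronglyMeasurable
    calc ∫ ω, ∏ i ∈ insert a s, f i ω ∂μ = ∫ ω, (f a * ∏ j ∈ s, f j) ω ∂μ := by
          refine integral_congr_ae (Filter.Eventually.of_forall (fun ω => ?_))
          simp only [Finset.prod_insert ha, Pi.mul_apply, Finset.prod_apply]
    _ = (∫ ω, f a ω ∂μ) * ∫ ω, (∏ j ∈ s, f j) ω ∂μ := h2
    _ = (∫ ω, f a ω ∂μ) * ∏ i ∈ s, ∫ ω, f i ω ∂μ := by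
          rw [← hfs, ih]

private def eo {N : ℕ} (i j : Fin N) (h : j ≠ i) : {q : Fin N × Fin N // q.1 < q.2} :=
  if hij : i < j then ⟨(i,j), hij⟩ else ⟨(j,i), lt_of_le_of_ne (not_lt.1 hij) h⟩

set_option maxHeartbeats 1000000 in
private lemma aux_ER_moments {N : ℕ} {ρ : ℝ} {Ω : Type} [MeasurableSpace Ω] {μ : Measure Ω}
    [IsProbabilityMeasure μ] {A : Ω → Matrix (Fin N) (Fin N) ℝ}
    (hER : IsERGraph μ A ρ) (hρ0 : 0 ≤ ρ) (d : ℝ) :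
    (∀ i : Fin N, ∫ ω, Real.exp (-(∑ j, A ω i j) / d) ∂μ
        = (1 - ρ + ρ * Real.exp (-(1/d)))^(N-1)) ∧
    (∀ i j : Fin N, i ≠ j →
      ∫ ω, Real.exp (-(∑ k, A ω i k) / d) * Real.exp (-(∑ k, A ω j k) / d) ∂μ
        = (1 - ρ + ρ * Real.exp (-(1/d))^2) * (1 - ρ + ρ * Real.exp (-(1/d)))^(2*N-4)) := by
  classical
  obtain ⟨hsym, hdiag, h01, hmeas, hP, hind⟩ := hER
  set Y : {q : Fin N × Fin N // q.1 < q.2} → Ω → ℝ := fun e ω => A ω e.val.1 e.val.2 with hY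
  set φe : ℝ → ℝ := fun t => Real.exp (-t/d) with hφe
  have hφem : Measurable φe := Real.measurable_exp.comp (measurable_id.neg.div_const d)
  have hφe0 : φe 0 = 1 := by rw [hφe]; simp
  have hφe1 : φe 1 = Real.exp (-(1/d)) := by rw [hφe]; simp only; rw [neg_div]
  -- the key factorization
  have key : ∀ (Φ : {q : Fin N × Fin N // q.1 < q.2} → ℝ → ℝ), (∀ e, Measurable (Φ e)) →
      ∀ S : Finset {q : Fin N × Fin N // q.1 < q.2},
      ∫ ω, ∏ e ∈ S, Φ e (Y e ω) ∂μ = ∏ e ∈ S, ((1-ρ) * Φ e 0 + ρ * Φ e 1) := by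
    intro Φ hΦ S
    have hind2 : iIndepFun (fun e ω => Φ e (Y e ω)) μ :=
      hind.comp Φ hΦ
    have h1 := aux_prod_integral (fun e ω => Φ e (Y e ω)) hind2
      (fun e => (hΦ e).comp (hmeas _ _)) S
    rw [h1]
    refine Finset.prod_congr rfl (fun e _ => ?_)
    exact aux_bernoulli (fun ω => h01 ω e.val.1 e.val.2) (hmeas _ _) hρ0
      (hP _ _ (ne_of_lt e.2)) (Φ e)
  -- the incident edge sets
  set Sv : Fin N → Finset {q : Fin N × Fin N // q.1 < q.2} :=
    fun i => Finset.univ.filter (fun e => e.val.1 = i ∨ e.val.2 = i) with hSv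
  have heo_mem : ∀ (i j : Fin N) (h : j ≠ i), eo i j h ∈ Sv i := by
    intro i j h
    rw [hSv]
    simp only [Finset.mem_filter, Finset.mem_univ, true_and]
    unfold eo
    split_ifs <;> simp
  have heo_mem' : ∀ (i j : Fin N) (h : j ≠ i), eo i j h ∈ Sv j := by
    intro i j h
    rw [hSv]
    simp only [Finset.mem_filter, Finset.mem_univ, true_and]
    unfold eo
    split_ifs <;> simp
  have heo_inj : ∀ (i : Fin N) (j₁ j₂ : Fin N) (h₁ : j₁ ≠ i) (h₂ : j₂ ≠ i),
      eo i j₁ h₁ = eo i j₂ h₂ → j₁ = j₂ := by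
    intro i j₁ j₂ h₁ h₂ heq
    unfold eo at heq
    split_ifs at heq with ha hb hb <;>
      simp only [Subtype.mk.injEq, Prod.mk.injEq] at heq
    · exact heq.2
    · exact absurd heq.1.symm h₂
    · exact absurd heq.1 h₁
    · exact heq.1
  have heo_surj : ∀ (i : Fin N), ∀ e ∈ Sv i, ∃ j, ∃ (h : j ≠ i), eo i j h = e := by
    intro i e he
    rw [hSv] at he
    simp only [Finset.mem_filter, Finset.mem_univ, true_and] at he
    rcases he with h1 | h2
    · have hlt : i < e.val.2 := h1 ▸ e.2
      refine ⟨e.val.2, ne_of_gt hlt, ?_⟩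
      unfold eo
      rw [dif_pos hlt]
      exact Subtype.ext (Prod.ext h1.symm rfl)
    · have hlt : e.val.1 < i := h2 ▸ e.2
      refine ⟨e.val.1, ne_of_lt hlt, ?_⟩
      unfold eo
      rw [dif_neg (not_lt.2 hlt.le)]
      exact Subtype.ext (Prod.ext rfl h2.symm)
  have heo_val : ∀ (ω : Ω) (i j : Fin N) (h : j ≠ i) (ψ : ℝ → ℝ),
      ψ (A ω i j) = ψ (Y (eo i j h) ω) := by
    intro ω i j h ψ
    unfold eo
    split_ifs with ha
    · rfl
    · rw [hY]; simp only; rw [hsym ω i j]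
  have hprod_bij : ∀ (i : Fin N) (ψ : ℝ → ℝ) (ω : Ω),
      ∏ j ∈ Finset.univ.erase i, ψ (A ω i j) = ∏ e ∈ Sv i, ψ (Y e ω) := by
    intro i ψ ω
    refine Finset.prod_bij (fun j hj => eo i j (Finset.mem_erase.1 hj).1) ?_ ?_ ?_ ?_
    · intro j hj; exact heo_mem i j _
    · intro j₁ h₁ j₂ h₂ heq; exact heo_inj i j₁ j₂ _ _ heq
    · intro e he
      obtain ⟨j, hj, hje⟩ := heo_surj i e he
      exact ⟨j, Finset.mem_erase.2 ⟨hj, Finset.mem_univ j⟩, hje⟩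
    · intro j hj; exact heo_val ω i j _ ψ
  have hcardSv : ∀ i : Fin N, (Sv i).card = N - 1 := by
    intro i
    have h1 : (Finset.univ.erase i).card = (Sv i).card := by
      refine Finset.card_bij (fun j hj => eo i j (Finset.mem_erase.1 hj).1) ?_ ?_ ?_
      · intro j hj; exact heo_mem i j _
      · intro j₁ h₁ j₂ h₂ heq; exact heo_inj i j₁ j₂ _ _ heq
      · intro e he
        obtain ⟨j, hj, hje⟩ := heo_surj i e he
        exact ⟨j, Finset.mem_erase.2 ⟨hj, Finset.mem_univ j⟩, hje⟩
    rw [← h1, Finset.card_erase_of_mem (Finset.mem_univ i)]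
    simp
  -- splitting the exponential of the degree
  have hsplit : ∀ (ω : Ω) (i : Fin N),
      Real.exp (-(∑ j, A ω i j) / d) = ∏ e ∈ Sv i, φe (Y e ω) := by
    intro ω i
    have h1 : -(∑ j, A ω i j) / d = ∑ j, (-(A ω i j)/d) := by
      rw [← Finset.sum_div, ← Finset.sum_neg_distrib]
    rw [h1, Real.exp_sum]
    rw [← Finset.mul_prod_erase Finset.univ _ (Finset.mem_univ i)]
    rw [hdiag ω i]
    norm_num
    rw [← hprod_bij i φe ω]
  constructor
  · -- single vertex
    intro i
    have h1 : ∫ ω, Real.exp (-(∑ j, A ω i j) / d) ∂μ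
        = ∫ ω, ∏ e ∈ Sv i, φe (Y e ω) ∂μ :=
      integral_congr_ae (Filter.Eventually.of_forall (fun ω => hsplit ω i))
    rw [h1, key (fun _ => φe) (fun _ => hφem) (Sv i)]
    rw [Finset.prod_const, hcardSv i]
    congr 1
    rw [hφe0, hφe1]
    ring
  · -- pairs
    intro i j hij
    have hN2 : 2 ≤ N := by
      have h1 : 1 < Fintype.card (Fin N) := Fintype.one_lt_card_iff_nontrivial.2 ⟨⟨i, j, hij⟩⟩
      simp at h1; omega
    set e0 := eo i j (Ne.symm hij) with he0
    have hinter : Sv i ∩ Sv j = {e0} := by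
      ext e
      simp only [Finset.mem_inter, Finset.mem_singleton, hSv, Finset.mem_filter,
        Finset.mem_univ, true_and]
      constructor
      · rintro ⟨h1 | h1, h2 | h2⟩
        · exact absurd (h1.symm.trans h2) hij
        · have hlt : i < j := by rw [← h1, ← h2]; exact e.2
          rw [he0]; unfold eo; rw [dif_pos hlt]
          exact Subtype.ext (Prod.ext h1 h2)
        · have hlt : j < i := by rw [← h2, ← h1]; exact e.2
          rw [he0]; unfold eo; rw [dif_neg (not_lt.2 hlt.le)]
          exact Subtype.ext (Prod.ext h2 h1)
        · exact absurd (h1.symm.trans h2) hij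
      · intro h
        rw [h, he0]
        unfold eo
        split_ifs <;> simp
    have he0Ui : e0 ∈ Sv i := heo_mem i j (Ne.symm hij)
    have he0U : e0 ∈ Sv i ∪ Sv j := Finset.mem_union_left _ he0Ui
    have hcardU : (Sv i ∪ Sv j).card = 2*N - 3 := by
      have h1 := Finset.card_union_add_card_inter (Sv i) (Sv j)
      rw [hinter, Finset.card_singleton, hcardSv i, hcardSv j] at h1
      omega
    set Φ : {q : Fin N × Fin N // q.1 < q.2} → ℝ → ℝ :=
      fun e t => if e = e0 then φe t * φe t else φe t with hΦ
    have hΦm : ∀ e, Measurable (Φ e) := by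
      intro e
      rw [hΦ]
      by_cases h : e = e0
      · simp only [if_pos h]; exact hφem.mul hφem
      · simp only [if_neg h]; exact hφem
    have hΦe0 : ∀ t, Φ e0 t = φe t * φe t := fun t => by rw [hΦ]; simp
    have hΦne : ∀ e, e ≠ e0 → ∀ t, Φ e t = φe t := fun e he t => by
      rw [hΦ]; simp [he]
    have hsplit2 : ∀ ω, Real.exp (-(∑ k, A ω i k) / d) * Real.exp (-(∑ k, A ω j k) / d)
        = ∏ e ∈ Sv i ∪ Sv j, Φ e (Y e ω) := by
      intro ω
      rw [hsplit ω i, hsplit ω j, ← Finset.prod_union_inter, hinter, Finset.prod_singleton]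
      rw [← Finset.mul_prod_erase _ (fun e => Φ e (Y e ω)) he0U,
          ← Finset.mul_prod_erase _ (fun e => φe (Y e ω)) he0U]
      have h2 : ∏ e ∈ (Sv i ∪ Sv j).erase e0, Φ e (Y e ω)
          = ∏ e ∈ (Sv i ∪ Sv j).erase e0, φe (Y e ω) :=
        Finset.prod_congr rfl (fun e he => hΦne e (Finset.ne_of_mem_erase he) _)
      rw [h2, hΦe0]
      ring
    have h3 : ∫ ω, Real.exp (-(∑ k, A ω i k) / d) * Real.exp (-(∑ k, A ω j k) / d) ∂μ
        = ∏ e ∈ Sv i ∪ Sv j, ((1-ρ) * Φ e 0 + ρ * Φ e 1) := by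
      rw [integral_congr_ae (Filter.Eventually.of_forall hsplit2), key Φ hΦm]
    rw [h3, ← Finset.mul_prod_erase _ _ he0U]
    have h4 : ∏ e ∈ (Sv i ∪ Sv j).erase e0, ((1-ρ)*Φ e 0 + ρ*Φ e 1)
        = (1 - ρ + ρ * Real.exp (-(1/d)))^(2*N-4) := by
      have h5 : ∀ e ∈ (Sv i ∪ Sv j).erase e0,
          ((1-ρ)*Φ e 0 + ρ*Φ e 1) = (1 - ρ + ρ * Real.exp (-(1/d))) := by
        intro e he
        rw [hΦne e (Finset.ne_of_mem_erase he), hΦne e (Finset.ne_of_mem_erase he),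
          hφe0, hφe1]
        ring
      rw [Finset.prod_congr rfl h5, Finset.prod_const, Finset.card_erase_of_mem he0U, hcardU]
      have h6 : 2*N-3-1 = 2*N-4 := by omega
      rw [h6]
    rw [h4]
    congr 1
    rw [hΦe0, hΦe0, hφe0, hφe1]
    ring

set_option maxHeartbeats 1000000 in
/-- **Theorem 4, homogeneous lower bound.**  Degree process at time 1 on the
Erdős–Rényi graph, all vertices initially in state `a`: conditionally on the graph the
survival indicators `ξ_i` are independent Bernoulli with `P(ξ_i = 1 | G) = e^{−δ_i/d}`
(encoded through conditional expectations of products given the graph σ-algebra).  Then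
`E[(ξ̄_a(1) − e^{−1})²] = Θ(max{1/d², 1/N})`, i.e. `‖ξ̄_a(1) − x_a(1)‖ = Θ(max{1/d, 1/√N})`. -/
theorem stmt_13 :
    ∃ c C d₀ : ℝ, ∃ N₀ : ℕ, 0 < c ∧ 0 < C ∧
      ∀ (N : ℕ) (ρ : ℝ) (Ω : Type) (_ : MeasurableSpace Ω) (μ : Measure Ω),
        IsProbabilityMeasure μ →
        ∀ (A : Ω → Matrix (Fin N) (Fin N) ℝ) (ξ : Ω → Fin N → ℝ),
        N₀ ≤ N → 0 < ρ → d₀ ≤ ((N : ℝ) - 1) * ρ → ((N : ℝ) - 1) * ρ ≤ (N : ℝ) - 1 →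
        IsERGraph μ A ρ →
        (∀ ω i, ξ ω i = 0 ∨ ξ ω i = 1) →
        (∀ i, Measurable fun ω => ξ ω i) →
        -- conditionally on the graph, the `ξ_i` are independent Bernoulli(e^{−δ_i/d}):
        (∀ T : Finset (Fin N),
          μ[(fun ω => ∏ i ∈ T, ξ ω i) | graphSigma A] =ᵐ[μ]
            fun ω => ∏ i ∈ T, Real.exp (-(∑ j, A ω i j) / (((N : ℝ) - 1) * ρ))) →
        c * max (1 / (((N : ℝ) - 1) * ρ) ^ 2) (1 / (N : ℝ)) ≤
            (∫ ω, ((1 / (N : ℝ)) * (∑ i, ξ ω i) - Real.exp (-1)) ^ 2 ∂μ) ∧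
          (∫ ω, ((1 / (N : ℝ)) * (∑ i, ξ ω i) - Real.exp (-1)) ^ 2 ∂μ) ≤
            C * max (1 / (((N : ℝ) - 1) * ρ) ^ 2) (1 / (N : ℝ)) := by
    classical
  refine ⟨0.01, 6, 16, 10000, by norm_num, by norm_num, ?_⟩
  intro N ρ Ω mΩ μ hprob A ξ hN hρ0 hd16 hdN1 hER h01ξ hmξ hcond
  set d : ℝ := ((N:ℝ)-1)*ρ with hd
  have hNR : (10000:ℝ) ≤ (N:ℝ) := by exact_mod_cast hN
  have hN1 : (0:ℝ) < (N:ℝ)-1 := by linarith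
  have hρ1 : ρ ≤ 1 := by
    by_contra h
    push_neg at h
    have h2 : ((N:ℝ)-1)*1 < ((N:ℝ)-1)*ρ := mul_lt_mul_of_pos_left h hN1
    rw [hd] at hdN1
    linarith
  -- conditional expectation reduction
  have hgm : graphSigma A ≤ mΩ := by
    apply Measurable.comap_le
    exact measurable_pi_lambda _ (fun i => measurable_pi_lambda _ (fun j => hER.2.2.2.1 i j))
  have hTint : ∀ T : Finset (Fin N), ∫ ω, ∏ i ∈ T, ξ ω i ∂μ
      = ∫ ω, ∏ i ∈ T, Real.exp (-(∑ j, A ω i j) / d) ∂μ := by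
    intro T
    rw [← integral_condExp hgm (f := fun ω => ∏ i ∈ T, ξ ω i)]
    exact integral_congr_ae (hcond T)
  obtain ⟨hM1, hM2⟩ := aux_ER_moments hER hρ0.le d
  set q1 : ℝ := 1 - ρ + ρ * Real.exp (-(1/d)) with hq1def
  set q2 : ℝ := 1 - ρ + ρ * Real.exp (-(1/d))^2 with hq2def
  set m1 : ℝ := q1^(N-1) with hm1def
  set m2 : ℝ := q2 * q1^(2*N-4) with hm2def
  -- integrability
  have hint_ξ : ∀ i, Integrable (fun ω => ξ ω i) μ := fun i =>
    integrable_of_bdd (hmξ i) (C := 1) (fun ω => by rcases h01ξ ω i with h|h <;> simp [h])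
  have hint_ξξ : ∀ i j, Integrable (fun ω => ξ ω i * ξ ω j) μ := fun i j =>
    integrable_of_bdd ((hmξ i).mul (hmξ j)) (C := 1) (fun ω => by
      rcases h01ξ ω i with h|h <;> rcases h01ξ ω j with h2|h2 <;> simp [h, h2])
  -- first and second moments
  have hIm1 : ∀ i, ∫ ω, ξ ω i ∂μ = m1 := by
    intro i
    have h := hTint {i}
    simp only [Finset.prod_singleton] at h
    rw [h, hm1def]
    exact hM1 i
  have hIm2 : ∀ i j, i ≠ j → ∫ ω, ξ ω i * ξ ω j ∂μ = m2 := by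
    intro i j hij
    have h := hTint {i,j}
    simp only [Finset.prod_pair hij] at h
    rw [h, hm2def, hq2def, hq1def]
    exact hM2 i j hij
  have hIdiag : ∀ i, ∫ ω, ξ ω i * ξ ω i ∂μ = m1 := by
    intro i
    have hpt : ∀ ω, ξ ω i * ξ ω i = ξ ω i := fun ω => by
      rcases h01ξ ω i with h|h <;> rw [h] <;> ring
    rw [integral_congr_ae (Filter.Eventually.of_forall hpt)]
    exact hIm1 i
  have hintS : Integrable (fun ω => ∑ i, ξ ω i) μ :=
    integrable_finset_sum _ (fun i _ => hint_ξ i)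
  have hintSS : Integrable (fun ω => ∑ i, ∑ j, ξ ω i * ξ ω j) μ :=
    integrable_finset_sum _ (fun i _ => integrable_finset_sum _ (fun j _ => hint_ξξ i j))
  have hS : ∫ ω, (∑ i, ξ ω i) ∂μ = (N:ℝ) * m1 := by
    rw [integral_finset_sum _ (fun i _ => hint_ξ i),
      Finset.sum_congr rfl (fun i _ => hIm1 i), Finset.sum_const, Finset.card_univ]
    simp [nsmul_eq_mul]
  have hSS : ∫ ω, (∑ i, ∑ j, ξ ω i * ξ ω j) ∂μ = (N:ℝ)*m1 + ((N:ℝ)^2 - (N:ℝ))*m2 := by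
    rw [integral_finset_sum _ (fun i _ => integrable_finset_sum _ (fun j _ => hint_ξξ i j))]
    have hrow : ∀ i : Fin N, (∫ ω, ∑ j, ξ ω i * ξ ω j ∂μ) = m1 + ((N:ℝ)-1)*m2 := by
      intro i
      rw [integral_finset_sum _ (fun j _ => hint_ξξ i j),
        ← Finset.add_sum_erase _ _ (Finset.mem_univ i), hIdiag i,
        Finset.sum_congr rfl (fun j hj => hIm2 i j (Ne.symm (Finset.ne_of_mem_erase hj))),
        Finset.sum_const, Finset.card_erase_of_mem (Finset.mem_univ i), Finset.card_univ]
      simp only [nsmul_eq_mul, Fintype.card_fin]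
      rw [Nat.cast_sub (by omega)]
      norm_num
    rw [Finset.sum_congr rfl (fun i _ => hrow i), Finset.sum_const, Finset.card_univ]
    simp only [nsmul_eq_mul, Fintype.card_fin]
    ring
  have hfinal : (∫ ω, ((1/(N:ℝ)) * (∑ i, ξ ω i) - Real.exp (-1))^2 ∂μ)
      = (1/(N:ℝ)^2) * ((N:ℝ) * m1 + ((N:ℝ)^2 - (N:ℝ)) * m2)
        - 2*Real.exp (-1) * m1 + Real.exp (-1)^2 := by
    have hpt : ∀ ω, ((1/(N:ℝ)) * (∑ i, ξ ω i) - Real.exp (-1))^2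
        = (1/(N:ℝ)^2) * (∑ i, ∑ j, ξ ω i * ξ ω j)
          - (2*Real.exp (-1)/(N:ℝ)) * (∑ i, ξ ω i) + Real.exp (-1)^2 := by
      intro ω
      have hsq : (∑ i, ξ ω i) * (∑ j, ξ ω j) = ∑ i, ∑ j, ξ ω i * ξ ω j :=
        Finset.sum_mul_sum _ _ _ _
      rw [← hsq]
      have hNne : (N:ℝ) ≠ 0 := by positivity
      field_simp
      ring
    rw [integral_congr_ae (Filter.Eventually.of_forall hpt)]
    rw [integral_add (f := fun ω => (1/(N:ℝ)^2) * (∑ i, ∑ j, ξ ω i * ξ ω j)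
          - (2*Real.exp (-1)/(N:ℝ)) * (∑ i, ξ ω i)) (g := fun _ => Real.exp (-1)^2)
        ((hintSS.const_mul _).sub (hintS.const_mul _)) (integrable_const _),
      integral_sub (f := fun ω => (1/(N:ℝ)^2) * (∑ i, ∑ j, ξ ω i * ξ ω j))
        (g := fun ω => (2*Real.exp (-1)/(N:ℝ)) * (∑ i, ξ ω i))
        (hintSS.const_mul _) (hintS.const_mul _),
      integral_const_mul, integral_const_mul, hS, hSS, integral_const]
    have hNne : (N:ℝ) ≠ 0 := by positivity
    simp only [probReal_univ, smul_eq_mul, one_mul]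
    field_simp
  have hmain := aux_analytic N ρ d q1 q2 m1 m2
    (∫ ω, ((1/(N:ℝ)) * (∑ i, ξ ω i) - Real.exp (-1))^2 ∂μ)
    hN hρ0 hρ1 hd hd16 hq1def hq2def hm1def hm2def hfinal
  exact hmain
end
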